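/- Let f be continuous on [0,1]³ satisfying the strict mixed-difference conditions, and let (p,λ) be an optimal projection cycle-vector for f on a finite grid S = S_x × S_y × S_z with {0,1} ⊂ S_x ∩ S_y ∩ S_z. If λ_i < 0 for some point x_i ∈ p, then x_i lies on one of the six edges of the unit cube that contain neither the vertex (0,0,0) nor the vertex (1,1,1). -/

import Mathlib

open Set Finset

/-- Two points of `ℝ³` are well-ordered if one dominates the other coordinatewise. -/
def WellOrdered3 (a b : ℝ × ℝ × ℝ) : Prop :=
  (a.1 ≤ b.1 ∧ a.2.1 ≤ b.2.1 ∧ a.2.2 ≤ b.2.2) ∨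
  (b.1 ≤ a.1 ∧ b.2.1 ≤ a.2.1 ∧ b.2.2 ≤ a.2.2)

/-- All second mixed differences of `f` (with positive increments, inside the unit
cube) in any two distinct variables are strictly positive. -/
def StrictMixed (f : ℝ → ℝ → ℝ → ℝ) : Prop :=
  (∀ u u' v v' w, u ∈ Set.Icc (0:ℝ) 1 → u' ∈ Set.Icc (0:ℝ) 1 → v ∈ Set.Icc (0:ℝ) 1 →
    v' ∈ Set.Icc (0:ℝ) 1 → w ∈ Set.Icc (0:ℝ) 1 → u < u' → v < v' →
    0 < f u' v' w - f u' v w - f u v' w + f u v w) ∧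
  (∀ u u' w w' v, u ∈ Set.Icc (0:ℝ) 1 → u' ∈ Set.Icc (0:ℝ) 1 → w ∈ Set.Icc (0:ℝ) 1 →
    w' ∈ Set.Icc (0:ℝ) 1 → v ∈ Set.Icc (0:ℝ) 1 → u < u' → w < w' →
    0 < f u' v w' - f u' v w - f u v w' + f u v w) ∧
  (∀ v v' w w' u, v ∈ Set.Icc (0:ℝ) 1 → v' ∈ Set.Icc (0:ℝ) 1 → w ∈ Set.Icc (0:ℝ) 1 →
    w' ∈ Set.Icc (0:ℝ) 1 → u ∈ Set.Icc (0:ℝ) 1 → v < v' → w < w' →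
    0 < f u v' w' - f u v' w - f u v w' + f u v w)

/-- A projection cycle-vector in `ℝ³`: finitely many pairwise distinct points with
nonzero weights, the sums of the weights over every plane `x = ξ`, `y = ξ`, `z = ξ`
being zero. -/
def IsPCV (m : ℕ) (x : Fin m → ℝ × ℝ × ℝ) (lam : Fin m → ℝ) : Prop :=
  Function.Injective x ∧ (∀ i, lam i ≠ 0) ∧
  (∀ ξ : ℝ, ∑ i, (if (x i).1 = ξ then lam i else 0) = 0) ∧
  (∀ ξ : ℝ, ∑ i, (if (x i).2.1 = ξ then lam i else 0) = 0) ∧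
  (∀ ξ : ℝ, ∑ i, (if (x i).2.2 = ξ then lam i else 0) = 0)

/-- The normalized weighted sum `Σ λᵢ f(xᵢ) / Σ |λᵢ|`. -/
noncomputable def pcvRatio (m : ℕ) (x : Fin m → ℝ × ℝ × ℝ) (lam : Fin m → ℝ)
    (f : ℝ → ℝ → ℝ → ℝ) : ℝ :=
  (∑ i, lam i * f (x i).1 (x i).2.1 (x i).2.2) / (∑ i, |lam i|)

/-- All points lie in the grid `Sx × Sy × Sz`. -/
def PointsIn (m : ℕ) (x : Fin m → ℝ × ℝ × ℝ) (Sx Sy Sz : Finset ℝ) : Prop :=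
  ∀ i, (x i).1 ∈ Sx ∧ (x i).2.1 ∈ Sy ∧ (x i).2.2 ∈ Sz

/-- `(p,λ)` is an optimal projection cycle-vector for `f` on the grid `Sx × Sy × Sz`:
it maximizes `Σ λᵢ f(xᵢ)/Σ|λᵢ|` among all projection cycle-vectors with points in
the grid. -/
def OptimalPCV (Sx Sy Sz : Finset ℝ) (f : ℝ → ℝ → ℝ → ℝ)
    (m : ℕ) (x : Fin m → ℝ × ℝ × ℝ) (lam : Fin m → ℝ) : Prop :=
  IsPCV m x lam ∧ PointsIn m x Sx Sy Sz ∧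
  ∀ (m' : ℕ) (x' : Fin m' → ℝ × ℝ × ℝ) (lam' : Fin m' → ℝ),
    IsPCV m' x' lam' → PointsIn m' x' Sx Sy Sz →
    pcvRatio m' x' lam' f ≤ pcvRatio m x lam f

/-- The six edges of the unit cube containing neither `(0,0,0)` nor `(1,1,1)`. -/
def OffDiagonalEdges : Set (ℝ × ℝ × ℝ) :=
  {p | p.1 ∈ Set.Icc (0:ℝ) 1 ∧ p.2.1 = 0 ∧ p.2.2 = 1} ∪
  {p | p.1 = 1 ∧ p.2.1 = 0 ∧ p.2.2 ∈ Set.Icc (0:ℝ) 1} ∪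
  {p | p.1 = 1 ∧ p.2.1 ∈ Set.Icc (0:ℝ) 1 ∧ p.2.2 = 0} ∪
  {p | p.1 ∈ Set.Icc (0:ℝ) 1 ∧ p.2.1 = 1 ∧ p.2.2 = 0} ∪
  {p | p.1 = 0 ∧ p.2.1 = 1 ∧ p.2.2 ∈ Set.Icc (0:ℝ) 1} ∪
  {p | p.1 = 0 ∧ p.2.1 ∈ Set.Icc (0:ℝ) 1 ∧ p.2.2 = 1}

private lemma abs_pert (m c ε : ℝ) (hε : 0 ≤ ε) (h : m ≠ 0 → ε * |c| ≤ |m|) :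
    |m + ε * c| = |m| + ε * (if 0 < m then c else if m < 0 then -c else |c|) := by
  rcases lt_trichotomy m 0 with hm | hm | hm
  · rw [if_neg (by linarith), if_pos hm]
    have h1 : ε * |c| ≤ -m := by
      have := h (ne_of_lt hm); rwa [abs_of_neg hm] at this
    have h2 : ε * c ≤ ε * |c| := mul_le_mul_of_nonneg_left (le_abs_self c) hε
    have h3 : m + ε * c ≤ 0 := by linarith
    rw [abs_of_nonpos h3, abs_of_neg hm]; ring
  · subst hm
    simp [abs_mul, abs_of_nonneg hε]
  · rw [if_pos hm]
    have h1 : ε * |c| ≤ m := by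
      have := h (ne_of_gt hm); rwa [abs_of_pos hm] at this
    have h2 : ε * (-c) ≤ ε * |c| := mul_le_mul_of_nonneg_left (neg_le_abs c) hε
    have h3 : 0 ≤ m + ε * c := by linarith
    rw [abs_of_nonneg h3, abs_of_pos hm]

private noncomputable def Wf (μ : ℝ × ℝ × ℝ → ℝ) (g : ℝ × ℝ × ℝ) (c : ℝ) : ℝ :=
  if 0 < μ g then c else if μ g < 0 then -c else |c|

private lemma Wf_zero (μ : ℝ × ℝ × ℝ → ℝ) (g : ℝ × ℝ × ℝ) : Wf μ g 0 = 0 := by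
  unfold Wf; split_ifs <;> simp

private lemma Wf_le (μ : ℝ × ℝ × ℝ → ℝ) (g : ℝ × ℝ × ℝ) (c : ℝ) : Wf μ g c ≤ |c| := by
  unfold Wf; split_ifs
  · exact le_abs_self c
  · exact neg_le_abs c
  · exact le_refl _

private lemma Wf_pos (μ : ℝ × ℝ × ℝ → ℝ) (g : ℝ × ℝ × ℝ) (c : ℝ) (h : 0 < μ g) :
    Wf μ g c = c := by unfold Wf; rw [if_pos h]

private lemma Wf_neg (μ : ℝ × ℝ × ℝ → ℝ) (g : ℝ × ℝ × ℝ) (c : ℝ) (h : μ g < 0) :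
    Wf μ g c = -c := by unfold Wf; rw [if_neg (by linarith), if_pos h]

private noncomputable def nu4 (P₁ P₂ P₃ P₄ : ℝ × ℝ × ℝ) : ℝ × ℝ × ℝ → ℝ := fun g =>
  (if g = P₁ then 1 else 0) - (if g = P₂ then 1 else 0)
    - (if g = P₃ then 1 else 0) + (if g = P₄ then 1 else 0)

private lemma nu4_bound (P₁ P₂ P₃ P₄ : ℝ × ℝ × ℝ) (g : ℝ × ℝ × ℝ) :
    |nu4 P₁ P₂ P₃ P₄ g| ≤ 4 := by
  unfold nu4; split_ifs <;> norm_num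

private lemma sum4 (G : Finset (ℝ × ℝ × ℝ)) (P₁ P₂ P₃ P₄ : ℝ × ℝ × ℝ)
    (h1 : P₁ ∈ G) (h2 : P₂ ∈ G) (h3 : P₃ ∈ G) (h4 : P₄ ∈ G)
    (d12 : P₁ ≠ P₂) (d13 : P₁ ≠ P₃) (d14 : P₁ ≠ P₄)
    (d23 : P₂ ≠ P₃) (d24 : P₂ ≠ P₄) (d34 : P₃ ≠ P₄)
    (K : ℝ × ℝ × ℝ → ℝ → ℝ) (hK : ∀ g, K g 0 = 0) :
    ∑ g ∈ G, K g (nu4 P₁ P₂ P₃ P₄ g) = K P₁ 1 + K P₂ (-1) + K P₃ (-1) + K P₄ 1 := by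
  have hsub : ({P₁, P₂, P₃, P₄} : Finset (ℝ × ℝ × ℝ)) ⊆ G := by
    intro g hg
    simp only [Finset.mem_insert, Finset.mem_singleton] at hg
    rcases hg with rfl | rfl | rfl | rfl <;> assumption
  have hvan : ∀ g ∈ G, g ∉ ({P₁, P₂, P₃, P₄} : Finset (ℝ × ℝ × ℝ)) →
      K g (nu4 P₁ P₂ P₃ P₄ g) = 0 := by
    intro g _ hg
    simp only [Finset.mem_insert, Finset.mem_singleton, not_or] at hg
    obtain ⟨e1, e2, e3, e4⟩ := hg
    have h0 : nu4 P₁ P₂ P₃ P₄ g = 0 := by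
      unfold nu4; rw [if_neg e1, if_neg e2, if_neg e3, if_neg e4]; ring
    rw [h0, hK]
  rw [← Finset.sum_subset hsub hvan]
  have v1 : nu4 P₁ P₂ P₃ P₄ P₁ = 1 := by
    unfold nu4; rw [if_pos rfl, if_neg d12, if_neg d13, if_neg d14]; ring
  have v2 : nu4 P₁ P₂ P₃ P₄ P₂ = -1 := by
    unfold nu4; rw [if_neg (Ne.symm d12), if_pos rfl, if_neg d23, if_neg d24]; ring
  have v3 : nu4 P₁ P₂ P₃ P₄ P₃ = -1 := by
    unfold nu4; rw [if_neg (Ne.symm d13), if_neg (Ne.symm d23), if_pos rfl, if_neg d34]; ring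
  have v4 : nu4 P₁ P₂ P₃ P₄ P₄ = 1 := by
    unfold nu4; rw [if_neg (Ne.symm d14), if_neg (Ne.symm d24), if_neg (Ne.symm d34), if_pos rfl]
    ring
  have hne1 : P₁ ∉ ({P₂, P₃, P₄} : Finset (ℝ × ℝ × ℝ)) := by simp [d12, d13, d14]
  have hne2 : P₂ ∉ ({P₃, P₄} : Finset (ℝ × ℝ × ℝ)) := by simp [d23, d24]
  have hne3 : P₃ ∉ ({P₄} : Finset (ℝ × ℝ × ℝ)) := by simp [d34]
  rw [show ({P₁, P₂, P₃, P₄} : Finset (ℝ × ℝ × ℝ)) = insert P₁ {P₂, P₃, P₄} from rfl,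
    Finset.sum_insert hne1,
    show ({P₂, P₃, P₄} : Finset (ℝ × ℝ × ℝ)) = insert P₂ {P₃, P₄} from rfl,
    Finset.sum_insert hne2,
    show ({P₃, P₄} : Finset (ℝ × ℝ × ℝ)) = insert P₃ {P₄} from rfl,
    Finset.sum_insert hne3, Finset.sum_singleton, v1, v2, v3, v4]
  ring

private lemma mono_x (f : ℝ → ℝ → ℝ → ℝ) (hf : StrictMixed f) (s t y z y' z' : ℝ)
    (hs : s ∈ Set.Icc (0:ℝ) 1) (ht : t ∈ Set.Icc (0:ℝ) 1) (hy : y ∈ Set.Icc (0:ℝ) 1)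
    (hz : z ∈ Set.Icc (0:ℝ) 1) (hy' : y' ∈ Set.Icc (0:ℝ) 1) (hz' : z' ∈ Set.Icc (0:ℝ) 1)
    (hst : s < t) (h1 : y ≤ y') (h2 : z ≤ z') (hne : (y, z) ≠ (y', z')) :
    0 < (f t y' z' - f s y' z') - (f t y z - f s y z) := by
  rcases eq_or_lt_of_le h1 with rfl | h1
  · rcases eq_or_lt_of_le h2 with rfl | h2
    · exact absurd rfl hne
    · have := hf.2.1 s t z z' y hs ht hz hz' hy hst h2
      linarith
  · rcases eq_or_lt_of_le h2 with rfl | h2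
    · have := hf.1 s t y y' z hs ht hy hy' hz hst h1
      linarith
    · have A := hf.1 s t y y' z' hs ht hy hy' hz' hst h1
      have B := hf.2.1 s t z z' y hs ht hz hz' hy hst h2
      linarith

private lemma mono_y (f : ℝ → ℝ → ℝ → ℝ) (hf : StrictMixed f) (s t x z x' z' : ℝ)
    (hs : s ∈ Set.Icc (0:ℝ) 1) (ht : t ∈ Set.Icc (0:ℝ) 1) (hx : x ∈ Set.Icc (0:ℝ) 1)
    (hz : z ∈ Set.Icc (0:ℝ) 1) (hx' : x' ∈ Set.Icc (0:ℝ) 1) (hz' : z' ∈ Set.Icc (0:ℝ) 1)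
    (hst : s < t) (h1 : x ≤ x') (h2 : z ≤ z') (hne : (x, z) ≠ (x', z')) :
    0 < (f x' t z' - f x' s z') - (f x t z - f x s z) := by
  rcases eq_or_lt_of_le h1 with rfl | h1
  · rcases eq_or_lt_of_le h2 with rfl | h2
    · exact absurd rfl hne
    · have := hf.2.2 s t z z' x hs ht hz hz' hx hst h2
      linarith
  · rcases eq_or_lt_of_le h2 with rfl | h2
    · have := hf.1 x x' s t z hx hx' hs ht hz h1 hst
      linarith
    · have A := hf.1 x x' s t z' hx hx' hs ht hz' h1 hst
      have B := hf.2.2 s t z z' x hs ht hz hz' hx hst h2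
      linarith

private lemma mono_z (f : ℝ → ℝ → ℝ → ℝ) (hf : StrictMixed f) (s t x y x' y' : ℝ)
    (hs : s ∈ Set.Icc (0:ℝ) 1) (ht : t ∈ Set.Icc (0:ℝ) 1) (hx : x ∈ Set.Icc (0:ℝ) 1)
    (hy : y ∈ Set.Icc (0:ℝ) 1) (hx' : x' ∈ Set.Icc (0:ℝ) 1) (hy' : y' ∈ Set.Icc (0:ℝ) 1)
    (hst : s < t) (h1 : x ≤ x') (h2 : y ≤ y') (hne : (x, y) ≠ (x', y')) :
    0 < (f x' y' t - f x' y' s) - (f x y t - f x y s) := by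
  rcases eq_or_lt_of_le h1 with rfl | h1
  · rcases eq_or_lt_of_le h2 with rfl | h2
    · exact absurd rfl hne
    · have := hf.2.2 y y' s t x hy hy' hs ht hx h2 hst
      linarith
  · rcases eq_or_lt_of_le h2 with rfl | h2
    · have := hf.2.1 x x' s t y hx hx' hs ht hy h1 hst
      linarith
    · have A := hf.2.1 x x' s t y' hx hx' hs ht hy' h1 hst
      have B := hf.2.2 y y' s t x hy hy' hs ht hx h2 hst
      linarith

theorem stmt_6 (f : ℝ → ℝ → ℝ → ℝ)
    (hcont : ContinuousOn (fun p : ℝ × ℝ × ℝ => f p.1 p.2.1 p.2.2)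
      (Icc (0:ℝ) 1 ×ˢ Icc (0:ℝ) 1 ×ˢ Icc (0:ℝ) 1))
    (hf : StrictMixed f)
    (Sx Sy Sz : Finset ℝ)
    (hSx : (Sx : Set ℝ) ⊆ Icc (0:ℝ) 1) (hSy : (Sy : Set ℝ) ⊆ Icc (0:ℝ) 1)
    (hSz : (Sz : Set ℝ) ⊆ Icc (0:ℝ) 1)
    (h01 : ({0, 1} : Finset ℝ) ⊆ Sx ∩ Sy ∩ Sz)
    (m : ℕ) (x : Fin m → ℝ × ℝ × ℝ) (lam : Fin m → ℝ)
    (hopt : OptimalPCV Sx Sy Sz f m x lam) :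
    ∀ i : Fin m, lam i < 0 → x i ∈ OffDiagonalEdges := by
  obtain ⟨⟨hinj, hne0, hmx, hmy, hmz⟩, hpts, hmax⟩ := hopt
  intro i hilam
  -- grid membership facts for 0 and 1
  have h0x : (0:ℝ) ∈ Sx := by
    have := h01 (by simp : (0:ℝ) ∈ ({0,1} : Finset ℝ))
    simp only [Finset.mem_inter] at this; exact this.1.1
  have h0y : (0:ℝ) ∈ Sy := by
    have := h01 (by simp : (0:ℝ) ∈ ({0,1} : Finset ℝ))
    simp only [Finset.mem_inter] at this; exact this.1.2
  have h0z : (0:ℝ) ∈ Sz := by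
    have := h01 (by simp : (0:ℝ) ∈ ({0,1} : Finset ℝ))
    simp only [Finset.mem_inter] at this; exact this.2
  have h1x : (1:ℝ) ∈ Sx := by
    have := h01 (by simp : (1:ℝ) ∈ ({0,1} : Finset ℝ))
    simp only [Finset.mem_inter] at this; exact this.1.1
  have h1y : (1:ℝ) ∈ Sy := by
    have := h01 (by simp : (1:ℝ) ∈ ({0,1} : Finset ℝ))
    simp only [Finset.mem_inter] at this; exact this.1.2
  have h1z : (1:ℝ) ∈ Sz := by
    have := h01 (by simp : (1:ℝ) ∈ ({0,1} : Finset ℝ))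
    simp only [Finset.mem_inter] at this; exact this.2
  set G : Finset (ℝ × ℝ × ℝ) := Sx ×ˢ Sy ×ˢ Sz with hGdef
  have hGmem : ∀ g : ℝ × ℝ × ℝ, g ∈ G ↔ g.1 ∈ Sx ∧ g.2.1 ∈ Sy ∧ g.2.2 ∈ Sz := by
    intro g
    rw [hGdef, Finset.mem_product, Finset.mem_product]
  have hxiG : ∀ j, x j ∈ G := by
    intro j; rw [hGmem]; exact hpts j
  set μ : ℝ × ℝ × ℝ → ℝ := fun g => ∑ j, if x j = g then lam j else 0 with hμdef
  have mu_apply : ∀ j, μ (x j) = lam j := by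
    intro j
    show (∑ b, if x b = x j then lam b else 0) = lam j
    rw [Finset.sum_eq_single j
      (fun b _ hbj => if_neg (fun h => hbj (hinj h)))
      (fun h => absurd (Finset.mem_univ j) h), if_pos rfl]
  have transfer : ∀ (Φ : ℝ → ℝ × ℝ × ℝ → ℝ), (∀ g, Φ 0 g = 0) →
      ∑ g ∈ G, Φ (μ g) g = ∑ j, Φ (lam j) (x j) := by
    intro Φ hΦ
    have himg : Finset.univ.image x ⊆ G := by
      intro g hg
      simp only [Finset.mem_image] at hg
      obtain ⟨j, _, rfl⟩ := hg
      exact hxiG j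
    have hvan : ∀ g ∈ G, g ∉ Finset.univ.image x → Φ (μ g) g = 0 := by
      intro g _ hg
      have hμ0 : μ g = 0 := by
        show (∑ b, if x b = g then lam b else 0) = 0
        apply Finset.sum_eq_zero
        intro b _
        apply if_neg
        intro h
        exact hg (Finset.mem_image.mpr ⟨b, Finset.mem_univ b, h⟩)
      rw [hμ0, hΦ]
    rw [← Finset.sum_subset himg hvan,
      Finset.sum_image (fun a _ b _ h => hinj h)]
    exact Finset.sum_congr rfl (fun j _ => by rw [mu_apply j])
  set N : ℝ := ∑ j, lam j * f (x j).1 (x j).2.1 (x j).2.2 with hNdef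
  set D : ℝ := ∑ j, |lam j| with hDdef
  have hD_pos : 0 < D := by
    have hpos : 0 < |lam i| := abs_pos.mpr (ne_of_lt hilam)
    have hle : |lam i| ≤ D := Finset.single_le_sum (fun j _ => abs_nonneg (lam j))
      (Finset.mem_univ i)
    linarith
  set M : ℝ := pcvRatio m x lam f with hMdef
  have hM_eq : M = N / D := rfl
  have hNMD : N = M * D := by
    rw [hM_eq, div_mul_cancel₀ _ (ne_of_gt hD_pos)]
  have hNG : ∑ g ∈ G, μ g * f g.1 g.2.1 g.2.2 = N := by
    rw [hNdef]; exact transfer (fun c g => c * f g.1 g.2.1 g.2.2) (fun g => by ring)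
  have hDG : ∑ g ∈ G, |μ g| = D := by
    rw [hDdef]; exact transfer (fun c _ => |c|) (fun g => abs_zero)
  have margμx : ∀ ξ : ℝ, ∑ g ∈ G, (if g.1 = ξ then μ g else 0) = 0 := by
    intro ξ
    rw [transfer (fun c g => if g.1 = ξ then c else 0) (fun g => by simp)]
    exact hmx ξ
  have margμy : ∀ ξ : ℝ, ∑ g ∈ G, (if g.2.1 = ξ then μ g else 0) = 0 := by
    intro ξ
    rw [transfer (fun c g => if g.2.1 = ξ then c else 0) (fun g => by simp)]
    exact hmy ξ
  have margμz : ∀ ξ : ℝ, ∑ g ∈ G, (if g.2.2 = ξ then μ g else 0) = 0 := by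
    intro ξ
    rw [transfer (fun c g => if g.2.2 = ξ then c else 0) (fun g => by simp)]
    exact hmz ξ
  -- M1 : optimality against arbitrary grid cycles
  have M1 : ∀ ν : ℝ × ℝ × ℝ → ℝ,
      (∀ ξ : ℝ, ∑ g ∈ G, (if g.1 = ξ then ν g else 0) = 0) →
      (∀ ξ : ℝ, ∑ g ∈ G, (if g.2.1 = ξ then ν g else 0) = 0) →
      (∀ ξ : ℝ, ∑ g ∈ G, (if g.2.2 = ξ then ν g else 0) = 0) →
      ∑ g ∈ G, ν g * f g.1 g.2.1 g.2.2 ≤ M * ∑ g ∈ G, |ν g| := by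
    intro ν hvx hvy hvz
    by_cases hs0 : (G.filter (fun g => ν g ≠ 0)).Nonempty
    case neg =>
      have hzero : ∀ g ∈ G, ν g = 0 := by
        intro g hg
        by_contra hng
        exact hs0 ⟨g, Finset.mem_filter.mpr ⟨hg, hng⟩⟩
      have e1 : ∑ g ∈ G, ν g * f g.1 g.2.1 g.2.2 = 0 :=
        Finset.sum_eq_zero (fun g hg => by rw [hzero g hg]; ring)
      have e2 : ∑ g ∈ G, |ν g| = 0 :=
        Finset.sum_eq_zero (fun g hg => by rw [hzero g hg]; exact abs_zero)
      rw [e1, e2, mul_zero]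
    case pos =>
      set s : Finset (ℝ × ℝ × ℝ) := G.filter (fun g => ν g ≠ 0) with hsdef
      set m' : ℕ := s.card with hm'def
      set e : {g // g ∈ s} ≃ Fin m' := s.equivFin with hedef
      set x' : Fin m' → ℝ × ℝ × ℝ := fun j => (e.symm j : ℝ × ℝ × ℝ) with hx'def
      set lam' : Fin m' → ℝ := fun j => ν (x' j) with hlam'def
      have hx's : ∀ j, x' j ∈ s := fun j => (e.symm j).2
      have hx'G : ∀ j, x' j ∈ G := fun j => (Finset.mem_filter.mp (hx's j)).1
      have hreix : ∀ K : ℝ × ℝ × ℝ → ℝ, (∀ g, ν g = 0 → K g = 0) →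
          ∑ j : Fin m', K (x' j) = ∑ g ∈ G, K g := by
        intro K hK0
        have step1 : ∑ j : Fin m', K (x' j) = ∑ b : {g // g ∈ s}, K b :=
          Equiv.sum_comp e.symm (fun (b : {g // g ∈ s}) => K b)
        have step2 : ∑ b : {g // g ∈ s}, K (b : ℝ × ℝ × ℝ) = ∑ g ∈ s, K g :=
          Finset.sum_coe_sort s K
        rw [step1, step2]
        apply Finset.sum_subset (Finset.filter_subset _ _)
        intro g hg hgs
        apply hK0
        by_contra hng
        exact hgs (Finset.mem_filter.mpr ⟨hg, hng⟩)
      have hinj' : Function.Injective x' := by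
        intro a b h
        have : e.symm a = e.symm b := Subtype.ext h
        exact e.symm.injective this
      have hpcv : IsPCV m' x' lam' := by
        refine ⟨hinj', ?_, ?_, ?_, ?_⟩
        · intro j
          exact (Finset.mem_filter.mp (hx's j)).2
        · intro ξ
          exact (hreix (fun g => if g.1 = ξ then ν g else 0)
            (fun g hg => by simp [hg])).trans (hvx ξ)
        · intro ξ
          exact (hreix (fun g => if g.2.1 = ξ then ν g else 0)
            (fun g hg => by simp [hg])).trans (hvy ξ)
        · intro ξ
          exact (hreix (fun g => if g.2.2 = ξ then ν g else 0)
            (fun g hg => by simp [hg])).trans (hvz ξ)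
      have hpts' : PointsIn m' x' Sx Sy Sz := by
        intro j
        exact (hGmem (x' j)).mp (hx'G j)
      have hle := hmax m' x' lam' hpcv hpts'
      have hnum : (∑ j, lam' j * f (x' j).1 (x' j).2.1 (x' j).2.2)
          = ∑ g ∈ G, ν g * f g.1 g.2.1 g.2.2 :=
        hreix (fun g => ν g * f g.1 g.2.1 g.2.2) (fun g hg => by simp [hg])
      have hden : (∑ j, |lam' j|) = ∑ g ∈ G, |ν g| :=
        hreix (fun g => |ν g|) (fun g hg => by simp [hg])
      have hBpos : 0 < ∑ g ∈ G, |ν g| := by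
        obtain ⟨g₀, hg₀⟩ := hs0
        have h1 : 0 < |ν g₀| := abs_pos.mpr (Finset.mem_filter.mp hg₀).2
        have h2 : |ν g₀| ≤ ∑ g ∈ G, |ν g| :=
          Finset.single_le_sum (fun g _ => abs_nonneg (ν g))
            (Finset.mem_filter.mp hg₀).1
        linarith
      have hratio : pcvRatio m' x' lam' f
          = (∑ g ∈ G, ν g * f g.1 g.2.1 g.2.2) / (∑ g ∈ G, |ν g|) := by
        unfold pcvRatio
        rw [hnum, hden]
      rw [hratio] at hle
      calc ∑ g ∈ G, ν g * f g.1 g.2.1 g.2.2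
          = ((∑ g ∈ G, ν g * f g.1 g.2.1 g.2.2) / (∑ g ∈ G, |ν g|)) * (∑ g ∈ G, |ν g|) := by
            rw [div_mul_cancel₀ _ (ne_of_gt hBpos)]
        _ ≤ M * ∑ g ∈ G, |ν g| := by
            apply mul_le_mul_of_nonneg_right _ (le_of_lt hBpos)
            exact hle
  -- nonnegativity of M via the empty cycle
  have hM0 : 0 ≤ M := by
    have hpcv0 : IsPCV 0 (fun j => j.elim0) (fun j => j.elim0) := by
      refine ⟨fun a => a.elim0, fun a => a.elim0, ?_, ?_, ?_⟩ <;> intro ξ <;> simp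
    have hpts0 : PointsIn 0 (fun j => j.elim0) Sx Sy Sz := fun j => j.elim0
    have := hmax 0 _ _ hpcv0 hpts0
    have h0 : pcvRatio 0 (fun j => j.elim0) (fun j => j.elim0) f = 0 := by
      unfold pcvRatio; simp
    rw [h0] at this
    exact this
  -- M2 : first-order optimality
  have M2 : ∀ ν : ℝ × ℝ × ℝ → ℝ, (∀ g, |ν g| ≤ 4) →
      (∀ ξ : ℝ, ∑ g ∈ G, (if g.1 = ξ then ν g else 0) = 0) →
      (∀ ξ : ℝ, ∑ g ∈ G, (if g.2.1 = ξ then ν g else 0) = 0) →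
      (∀ ξ : ℝ, ∑ g ∈ G, (if g.2.2 = ξ then ν g else 0) = 0) →
      ∑ g ∈ G, ν g * f g.1 g.2.1 g.2.2 ≤ M * ∑ g ∈ G, Wf μ g (ν g) := by
    intro ν hbd hvx hvy hvz
    set T : Finset (ℝ × ℝ × ℝ) := G.filter (fun g => μ g ≠ 0) with hTdef
    have hTne : T.Nonempty := ⟨x i, Finset.mem_filter.mpr ⟨hxiG i, by
      rw [mu_apply i]; exact ne_of_lt hilam⟩⟩
    set δ : ℝ := T.inf' hTne (fun g => |μ g|) with hδdef
    have hδpos : 0 < δ := by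
      rw [hδdef, Finset.lt_inf'_iff]
      intro g hg
      exact abs_pos.mpr (Finset.mem_filter.mp hg).2
    set ε : ℝ := δ / 5 with hεdef
    have hε : 0 < ε := by positivity
    have hkey : ∀ g ∈ G, μ g ≠ 0 → ε * |ν g| ≤ |μ g| := by
      intro g hg hμg
      have hδle : δ ≤ |μ g| := Finset.inf'_le _ (Finset.mem_filter.mpr ⟨hg, hμg⟩)
      have := hbd g
      have habs : 0 ≤ |ν g| := abs_nonneg _
      nlinarith
    have hmargx : ∀ ξ : ℝ, ∑ g ∈ G, (if g.1 = ξ then μ g + ε * ν g else 0) = 0 := by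
      intro ξ
      have : ∀ g ∈ G, (if g.1 = ξ then μ g + ε * ν g else 0)
          = (if g.1 = ξ then μ g else 0) + ε * (if g.1 = ξ then ν g else 0) := by
        intro g _; split_ifs <;> ring
      rw [Finset.sum_congr rfl this, Finset.sum_add_distrib, ← Finset.mul_sum,
        margμx ξ, hvx ξ]
      ring
    have hmargy : ∀ ξ : ℝ, ∑ g ∈ G, (if g.2.1 = ξ then μ g + ε * ν g else 0) = 0 := by
      intro ξ
      have : ∀ g ∈ G, (if g.2.1 = ξ then μ g + ε * ν g else 0)
          = (if g.2.1 = ξ then μ g else 0) + ε * (if g.2.1 = ξ then ν g else 0) := by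
        intro g _; split_ifs <;> ring
      rw [Finset.sum_congr rfl this, Finset.sum_add_distrib, ← Finset.mul_sum,
        margμy ξ, hvy ξ]
      ring
    have hmargz : ∀ ξ : ℝ, ∑ g ∈ G, (if g.2.2 = ξ then μ g + ε * ν g else 0) = 0 := by
      intro ξ
      have : ∀ g ∈ G, (if g.2.2 = ξ then μ g + ε * ν g else 0)
          = (if g.2.2 = ξ then μ g else 0) + ε * (if g.2.2 = ξ then ν g else 0) := by
        intro g _; split_ifs <;> ring
      rw [Finset.sum_congr rfl this, Finset.sum_add_distrib, ← Finset.mul_sum,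
        margμz ξ, hvz ξ]
      ring
    have hM1 := M1 (fun g => μ g + ε * ν g) hmargx hmargy hmargz
    have hL : ∑ g ∈ G, (μ g + ε * ν g) * f g.1 g.2.1 g.2.2
        = N + ε * ∑ g ∈ G, ν g * f g.1 g.2.1 g.2.2 := by
      have : ∀ g ∈ G, (μ g + ε * ν g) * f g.1 g.2.1 g.2.2
          = μ g * f g.1 g.2.1 g.2.2 + ε * (ν g * f g.1 g.2.1 g.2.2) := by
        intro g _; ring
      rw [Finset.sum_congr rfl this, Finset.sum_add_distrib, ← Finset.mul_sum, hNG]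
    have hR : ∑ g ∈ G, |μ g + ε * ν g| = D + ε * ∑ g ∈ G, Wf μ g (ν g) := by
      have : ∀ g ∈ G, |μ g + ε * ν g| = |μ g| + ε * Wf μ g (ν g) := by
        intro g hg
        exact abs_pert (μ g) (ν g) ε (le_of_lt hε) (fun h => hkey g hg h)
      rw [Finset.sum_congr rfl this, Finset.sum_add_distrib, ← Finset.mul_sum, hDG]
    rw [hL, hR] at hM1
    have := hNMD
    have hfinal : ε * (∑ g ∈ G, ν g * f g.1 g.2.1 g.2.2)
        ≤ ε * (M * ∑ g ∈ G, Wf μ g (ν g)) := by nlinarith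
    exact (mul_le_mul_iff_right₀ hε).mp hfinal
  
  -- rectangle-cycle inequalities, one per axis
  have rect_x : ∀ s t F₁ F₂ G₁ G₂ : ℝ, s ∈ Sx → t ∈ Sx → F₁ ∈ Sy → F₂ ∈ Sz →
      G₁ ∈ Sy → G₂ ∈ Sz → s ≠ t → ¬(F₁ = G₁ ∧ F₂ = G₂) →
      f s F₁ F₂ - f s G₁ G₂ - f t F₁ F₂ + f t G₁ G₂ ≤
        M * (Wf μ (s, F₁, F₂) 1 + Wf μ (s, G₁, G₂) (-1)
          + Wf μ (t, F₁, F₂) (-1) + Wf μ (t, G₁, G₂) 1) := by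
    intro s t F₁ F₂ G₁ G₂ hs ht hF₁ hF₂ hG₁ hG₂ hst hFG
    have d12 : ((s, F₁, F₂) : ℝ × ℝ × ℝ) ≠ (s, G₁, G₂) := by
      simp only [ne_eq, Prod.mk.injEq]
      intro h; exact hFG ⟨h.2.1, h.2.2⟩
    have d13 : ((s, F₁, F₂) : ℝ × ℝ × ℝ) ≠ (t, F₁, F₂) := by
      simp only [ne_eq, Prod.mk.injEq]; intro h; exact hst h.1
    have d14 : ((s, F₁, F₂) : ℝ × ℝ × ℝ) ≠ (t, G₁, G₂) := by
      simp only [ne_eq, Prod.mk.injEq]; intro h; exact hst h.1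
    have d23 : ((s, G₁, G₂) : ℝ × ℝ × ℝ) ≠ (t, F₁, F₂) := by
      simp only [ne_eq, Prod.mk.injEq]; intro h; exact hst h.1
    have d24 : ((s, G₁, G₂) : ℝ × ℝ × ℝ) ≠ (t, G₁, G₂) := by
      simp only [ne_eq, Prod.mk.injEq]; intro h; exact hst h.1
    have d34 : ((t, F₁, F₂) : ℝ × ℝ × ℝ) ≠ (t, G₁, G₂) := by
      simp only [ne_eq, Prod.mk.injEq]
      intro h; exact hFG ⟨h.2.1, h.2.2⟩
    have m1 : ((s, F₁, F₂) : ℝ × ℝ × ℝ) ∈ G := (hGmem _).mpr ⟨hs, hF₁, hF₂⟩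
    have m2 : ((s, G₁, G₂) : ℝ × ℝ × ℝ) ∈ G := (hGmem _).mpr ⟨hs, hG₁, hG₂⟩
    have m3 : ((t, F₁, F₂) : ℝ × ℝ × ℝ) ∈ G := (hGmem _).mpr ⟨ht, hF₁, hF₂⟩
    have m4 : ((t, G₁, G₂) : ℝ × ℝ × ℝ) ∈ G := (hGmem _).mpr ⟨ht, hG₁, hG₂⟩
    have hmx4 : ∀ ξ : ℝ, ∑ g ∈ G,
        (if g.1 = ξ then nu4 (s,F₁,F₂) (s,G₁,G₂) (t,F₁,F₂) (t,G₁,G₂) g else 0) = 0 := by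
      intro ξ
      have h : (∑ g ∈ G,
          (if g.1 = ξ then nu4 (s,F₁,F₂) (s,G₁,G₂) (t,F₁,F₂) (t,G₁,G₂) g else 0))
          = (if s = ξ then (1:ℝ) else 0) + (if s = ξ then (-1:ℝ) else 0)
            + (if t = ξ then (-1:ℝ) else 0) + (if t = ξ then (1:ℝ) else 0) :=
        sum4 G _ _ _ _ m1 m2 m3 m4 d12 d13 d14 d23 d24 d34
          (fun g c => if g.1 = ξ then c else 0) (fun g => by simp)
      rw [h]; split_ifs <;> norm_num
    have hmy4 : ∀ ξ : ℝ, ∑ g ∈ G,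
        (if g.2.1 = ξ then nu4 (s,F₁,F₂) (s,G₁,G₂) (t,F₁,F₂) (t,G₁,G₂) g else 0) = 0 := by
      intro ξ
      have h : (∑ g ∈ G,
          (if g.2.1 = ξ then nu4 (s,F₁,F₂) (s,G₁,G₂) (t,F₁,F₂) (t,G₁,G₂) g else 0))
          = (if F₁ = ξ then (1:ℝ) else 0) + (if G₁ = ξ then (-1:ℝ) else 0)
            + (if F₁ = ξ then (-1:ℝ) else 0) + (if G₁ = ξ then (1:ℝ) else 0) :=
        sum4 G _ _ _ _ m1 m2 m3 m4 d12 d13 d14 d23 d24 d34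
          (fun g c => if g.2.1 = ξ then c else 0) (fun g => by simp)
      rw [h]; split_ifs <;> norm_num
    have hmz4 : ∀ ξ : ℝ, ∑ g ∈ G,
        (if g.2.2 = ξ then nu4 (s,F₁,F₂) (s,G₁,G₂) (t,F₁,F₂) (t,G₁,G₂) g else 0) = 0 := by
      intro ξ
      have h : (∑ g ∈ G,
          (if g.2.2 = ξ then nu4 (s,F₁,F₂) (s,G₁,G₂) (t,F₁,F₂) (t,G₁,G₂) g else 0))
          = (if F₂ = ξ then (1:ℝ) else 0) + (if G₂ = ξ then (-1:ℝ) else 0)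
            + (if F₂ = ξ then (-1:ℝ) else 0) + (if G₂ = ξ then (1:ℝ) else 0) :=
        sum4 G _ _ _ _ m1 m2 m3 m4 d12 d13 d14 d23 d24 d34
          (fun g c => if g.2.2 = ξ then c else 0) (fun g => by simp)
      rw [h]; split_ifs <;> norm_num
    have hL : (∑ g ∈ G,
        nu4 (s,F₁,F₂) (s,G₁,G₂) (t,F₁,F₂) (t,G₁,G₂) g * f g.1 g.2.1 g.2.2)
        = 1 * f s F₁ F₂ + (-1) * f s G₁ G₂ + (-1) * f t F₁ F₂ + 1 * f t G₁ G₂ :=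
      sum4 G _ _ _ _ m1 m2 m3 m4 d12 d13 d14 d23 d24 d34
        (fun g c => c * f g.1 g.2.1 g.2.2) (fun g => by simp)
    have hW : (∑ g ∈ G,
        Wf μ g (nu4 (s,F₁,F₂) (s,G₁,G₂) (t,F₁,F₂) (t,G₁,G₂) g))
        = Wf μ (s,F₁,F₂) 1 + Wf μ (s,G₁,G₂) (-1) + Wf μ (t,F₁,F₂) (-1)
          + Wf μ (t,G₁,G₂) 1 :=
      sum4 G _ _ _ _ m1 m2 m3 m4 d12 d13 d14 d23 d24 d34 (Wf μ) (Wf_zero μ)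
    have hfin := M2 (nu4 (s,F₁,F₂) (s,G₁,G₂) (t,F₁,F₂) (t,G₁,G₂))
      (nu4_bound _ _ _ _) hmx4 hmy4 hmz4
    rw [hL, hW] at hfin
    linarith
  have rect_y : ∀ s t F₁ F₂ G₁ G₂ : ℝ, s ∈ Sy → t ∈ Sy → F₁ ∈ Sx → F₂ ∈ Sz →
      G₁ ∈ Sx → G₂ ∈ Sz → s ≠ t → ¬(F₁ = G₁ ∧ F₂ = G₂) →
      f F₁ s F₂ - f G₁ s G₂ - f F₁ t F₂ + f G₁ t G₂ ≤
        M * (Wf μ (F₁, s, F₂) 1 + Wf μ (G₁, s, G₂) (-1)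
          + Wf μ (F₁, t, F₂) (-1) + Wf μ (G₁, t, G₂) 1) := by
    intro s t F₁ F₂ G₁ G₂ hs ht hF₁ hF₂ hG₁ hG₂ hst hFG
    have d12 : ((F₁, s, F₂) : ℝ × ℝ × ℝ) ≠ (G₁, s, G₂) := by
      simp only [ne_eq, Prod.mk.injEq]
      intro h; exact hFG ⟨h.1, h.2.2⟩
    have d13 : ((F₁, s, F₂) : ℝ × ℝ × ℝ) ≠ (F₁, t, F₂) := by
      simp only [ne_eq, Prod.mk.injEq]; intro h; exact hst h.2.1
    have d14 : ((F₁, s, F₂) : ℝ × ℝ × ℝ) ≠ (G₁, t, G₂) := by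
      simp only [ne_eq, Prod.mk.injEq]; intro h; exact hst h.2.1
    have d23 : ((G₁, s, G₂) : ℝ × ℝ × ℝ) ≠ (F₁, t, F₂) := by
      simp only [ne_eq, Prod.mk.injEq]; intro h; exact hst h.2.1
    have d24 : ((G₁, s, G₂) : ℝ × ℝ × ℝ) ≠ (G₁, t, G₂) := by
      simp only [ne_eq, Prod.mk.injEq]; intro h; exact hst h.2.1
    have d34 : ((F₁, t, F₂) : ℝ × ℝ × ℝ) ≠ (G₁, t, G₂) := by
      simp only [ne_eq, Prod.mk.injEq]
      intro h; exact hFG ⟨h.1, h.2.2⟩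
    have m1 : ((F₁, s, F₂) : ℝ × ℝ × ℝ) ∈ G := (hGmem _).mpr ⟨hF₁, hs, hF₂⟩
    have m2 : ((G₁, s, G₂) : ℝ × ℝ × ℝ) ∈ G := (hGmem _).mpr ⟨hG₁, hs, hG₂⟩
    have m3 : ((F₁, t, F₂) : ℝ × ℝ × ℝ) ∈ G := (hGmem _).mpr ⟨hF₁, ht, hF₂⟩
    have m4 : ((G₁, t, G₂) : ℝ × ℝ × ℝ) ∈ G := (hGmem _).mpr ⟨hG₁, ht, hG₂⟩
    have hmx4 : ∀ ξ : ℝ, ∑ g ∈ G,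
        (if g.1 = ξ then nu4 (F₁,s,F₂) (G₁,s,G₂) (F₁,t,F₂) (G₁,t,G₂) g else 0) = 0 := by
      intro ξ
      have h : (∑ g ∈ G,
          (if g.1 = ξ then nu4 (F₁,s,F₂) (G₁,s,G₂) (F₁,t,F₂) (G₁,t,G₂) g else 0))
          = (if F₁ = ξ then (1:ℝ) else 0) + (if G₁ = ξ then (-1:ℝ) else 0)
            + (if F₁ = ξ then (-1:ℝ) else 0) + (if G₁ = ξ then (1:ℝ) else 0) :=
        sum4 G _ _ _ _ m1 m2 m3 m4 d12 d13 d14 d23 d24 d34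
          (fun g c => if g.1 = ξ then c else 0) (fun g => by simp)
      rw [h]; split_ifs <;> norm_num
    have hmy4 : ∀ ξ : ℝ, ∑ g ∈ G,
        (if g.2.1 = ξ then nu4 (F₁,s,F₂) (G₁,s,G₂) (F₁,t,F₂) (G₁,t,G₂) g else 0) = 0 := by
      intro ξ
      have h : (∑ g ∈ G,
          (if g.2.1 = ξ then nu4 (F₁,s,F₂) (G₁,s,G₂) (F₁,t,F₂) (G₁,t,G₂) g else 0))
          = (if s = ξ then (1:ℝ) else 0) + (if s = ξ then (-1:ℝ) else 0)
            + (if t = ξ then (-1:ℝ) else 0) + (if t = ξ then (1:ℝ) else 0) :=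
        sum4 G _ _ _ _ m1 m2 m3 m4 d12 d13 d14 d23 d24 d34
          (fun g c => if g.2.1 = ξ then c else 0) (fun g => by simp)
      rw [h]; split_ifs <;> norm_num
    have hmz4 : ∀ ξ : ℝ, ∑ g ∈ G,
        (if g.2.2 = ξ then nu4 (F₁,s,F₂) (G₁,s,G₂) (F₁,t,F₂) (G₁,t,G₂) g else 0) = 0 := by
      intro ξ
      have h : (∑ g ∈ G,
          (if g.2.2 = ξ then nu4 (F₁,s,F₂) (G₁,s,G₂) (F₁,t,F₂) (G₁,t,G₂) g else 0))
          = (if F₂ = ξ then (1:ℝ) else 0) + (if G₂ = ξ then (-1:ℝ) else 0)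
            + (if F₂ = ξ then (-1:ℝ) else 0) + (if G₂ = ξ then (1:ℝ) else 0) :=
        sum4 G _ _ _ _ m1 m2 m3 m4 d12 d13 d14 d23 d24 d34
          (fun g c => if g.2.2 = ξ then c else 0) (fun g => by simp)
      rw [h]; split_ifs <;> norm_num
    have hL : (∑ g ∈ G,
        nu4 (F₁,s,F₂) (G₁,s,G₂) (F₁,t,F₂) (G₁,t,G₂) g * f g.1 g.2.1 g.2.2)
        = 1 * f F₁ s F₂ + (-1) * f G₁ s G₂ + (-1) * f F₁ t F₂ + 1 * f G₁ t G₂ :=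
      sum4 G _ _ _ _ m1 m2 m3 m4 d12 d13 d14 d23 d24 d34
        (fun g c => c * f g.1 g.2.1 g.2.2) (fun g => by simp)
    have hW : (∑ g ∈ G,
        Wf μ g (nu4 (F₁,s,F₂) (G₁,s,G₂) (F₁,t,F₂) (G₁,t,G₂) g))
        = Wf μ (F₁,s,F₂) 1 + Wf μ (G₁,s,G₂) (-1) + Wf μ (F₁,t,F₂) (-1)
          + Wf μ (G₁,t,G₂) 1 :=
      sum4 G _ _ _ _ m1 m2 m3 m4 d12 d13 d14 d23 d24 d34 (Wf μ) (Wf_zero μ)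
    have hfin := M2 (nu4 (F₁,s,F₂) (G₁,s,G₂) (F₁,t,F₂) (G₁,t,G₂))
      (nu4_bound _ _ _ _) hmx4 hmy4 hmz4
    rw [hL, hW] at hfin
    linarith
  have rect_z : ∀ s t F₁ F₂ G₁ G₂ : ℝ, s ∈ Sz → t ∈ Sz → F₁ ∈ Sx → F₂ ∈ Sy →
      G₁ ∈ Sx → G₂ ∈ Sy → s ≠ t → ¬(F₁ = G₁ ∧ F₂ = G₂) →
      f F₁ F₂ s - f G₁ G₂ s - f F₁ F₂ t + f G₁ G₂ t ≤
        M * (Wf μ (F₁, F₂, s) 1 + Wf μ (G₁, G₂, s) (-1)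
          + Wf μ (F₁, F₂, t) (-1) + Wf μ (G₁, G₂, t) 1) := by
    intro s t F₁ F₂ G₁ G₂ hs ht hF₁ hF₂ hG₁ hG₂ hst hFG
    have d12 : ((F₁, F₂, s) : ℝ × ℝ × ℝ) ≠ (G₁, G₂, s) := by
      simp only [ne_eq, Prod.mk.injEq]
      intro h; exact hFG ⟨h.1, h.2.1⟩
    have d13 : ((F₁, F₂, s) : ℝ × ℝ × ℝ) ≠ (F₁, F₂, t) := by
      simp only [ne_eq, Prod.mk.injEq]; intro h; exact hst h.2.2
    have d14 : ((F₁, F₂, s) : ℝ × ℝ × ℝ) ≠ (G₁, G₂, t) := by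
      simp only [ne_eq, Prod.mk.injEq]; intro h; exact hst h.2.2
    have d23 : ((G₁, G₂, s) : ℝ × ℝ × ℝ) ≠ (F₁, F₂, t) := by
      simp only [ne_eq, Prod.mk.injEq]; intro h; exact hst h.2.2
    have d24 : ((G₁, G₂, s) : ℝ × ℝ × ℝ) ≠ (G₁, G₂, t) := by
      simp only [ne_eq, Prod.mk.injEq]; intro h; exact hst h.2.2
    have d34 : ((F₁, F₂, t) : ℝ × ℝ × ℝ) ≠ (G₁, G₂, t) := by
      simp only [ne_eq, Prod.mk.injEq]
      intro h; exact hFG ⟨h.1, h.2.1⟩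
    have m1 : ((F₁, F₂, s) : ℝ × ℝ × ℝ) ∈ G := (hGmem _).mpr ⟨hF₁, hF₂, hs⟩
    have m2 : ((G₁, G₂, s) : ℝ × ℝ × ℝ) ∈ G := (hGmem _).mpr ⟨hG₁, hG₂, hs⟩
    have m3 : ((F₁, F₂, t) : ℝ × ℝ × ℝ) ∈ G := (hGmem _).mpr ⟨hF₁, hF₂, ht⟩
    have m4 : ((G₁, G₂, t) : ℝ × ℝ × ℝ) ∈ G := (hGmem _).mpr ⟨hG₁, hG₂, ht⟩
    have hmx4 : ∀ ξ : ℝ, ∑ g ∈ G,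
        (if g.1 = ξ then nu4 (F₁,F₂,s) (G₁,G₂,s) (F₁,F₂,t) (G₁,G₂,t) g else 0) = 0 := by
      intro ξ
      have h : (∑ g ∈ G,
          (if g.1 = ξ then nu4 (F₁,F₂,s) (G₁,G₂,s) (F₁,F₂,t) (G₁,G₂,t) g else 0))
          = (if F₁ = ξ then (1:ℝ) else 0) + (if G₁ = ξ then (-1:ℝ) else 0)
            + (if F₁ = ξ then (-1:ℝ) else 0) + (if G₁ = ξ then (1:ℝ) else 0) :=
        sum4 G _ _ _ _ m1 m2 m3 m4 d12 d13 d14 d23 d24 d34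
          (fun g c => if g.1 = ξ then c else 0) (fun g => by simp)
      rw [h]; split_ifs <;> norm_num
    have hmy4 : ∀ ξ : ℝ, ∑ g ∈ G,
        (if g.2.1 = ξ then nu4 (F₁,F₂,s) (G₁,G₂,s) (F₁,F₂,t) (G₁,G₂,t) g else 0) = 0 := by
      intro ξ
      have h : (∑ g ∈ G,
          (if g.2.1 = ξ then nu4 (F₁,F₂,s) (G₁,G₂,s) (F₁,F₂,t) (G₁,G₂,t) g else 0))
          = (if F₂ = ξ then (1:ℝ) else 0) + (if G₂ = ξ then (-1:ℝ) else 0)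
            + (if F₂ = ξ then (-1:ℝ) else 0) + (if G₂ = ξ then (1:ℝ) else 0) :=
        sum4 G _ _ _ _ m1 m2 m3 m4 d12 d13 d14 d23 d24 d34
          (fun g c => if g.2.1 = ξ then c else 0) (fun g => by simp)
      rw [h]; split_ifs <;> norm_num
    have hmz4 : ∀ ξ : ℝ, ∑ g ∈ G,
        (if g.2.2 = ξ then nu4 (F₁,F₂,s) (G₁,G₂,s) (F₁,F₂,t) (G₁,G₂,t) g else 0) = 0 := by
      intro ξ
      have h : (∑ g ∈ G,
          (if g.2.2 = ξ then nu4 (F₁,F₂,s) (G₁,G₂,s) (F₁,F₂,t) (G₁,G₂,t) g else 0))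
          = (if s = ξ then (1:ℝ) else 0) + (if s = ξ then (-1:ℝ) else 0)
            + (if t = ξ then (-1:ℝ) else 0) + (if t = ξ then (1:ℝ) else 0) :=
        sum4 G _ _ _ _ m1 m2 m3 m4 d12 d13 d14 d23 d24 d34
          (fun g c => if g.2.2 = ξ then c else 0) (fun g => by simp)
      rw [h]; split_ifs <;> norm_num
    have hL : (∑ g ∈ G,
        nu4 (F₁,F₂,s) (G₁,G₂,s) (F₁,F₂,t) (G₁,G₂,t) g * f g.1 g.2.1 g.2.2)
        = 1 * f F₁ F₂ s + (-1) * f G₁ G₂ s + (-1) * f F₁ F₂ t + 1 * f G₁ G₂ t :=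
      sum4 G _ _ _ _ m1 m2 m3 m4 d12 d13 d14 d23 d24 d34
        (fun g c => c * f g.1 g.2.1 g.2.2) (fun g => by simp)
    have hW : (∑ g ∈ G,
        Wf μ g (nu4 (F₁,F₂,s) (G₁,G₂,s) (F₁,F₂,t) (G₁,G₂,t) g))
        = Wf μ (F₁,F₂,s) 1 + Wf μ (G₁,G₂,s) (-1) + Wf μ (F₁,F₂,t) (-1)
          + Wf μ (G₁,G₂,t) 1 :=
      sum4 G _ _ _ _ m1 m2 m3 m4 d12 d13 d14 d23 d24 d34 (Wf μ) (Wf_zero μ)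
    have hfin := M2 (nu4 (F₁,F₂,s) (G₁,G₂,s) (F₁,F₂,t) (G₁,G₂,t))
      (nu4_bound _ _ _ _) hmx4 hmy4 hmz4
    rw [hL, hW] at hfin
    linarith
  
  have hIx : ∀ r : ℝ, r ∈ Sx → r ∈ Set.Icc (0:ℝ) 1 := fun r hr => hSx (Finset.mem_coe.mpr hr)
  have hIy : ∀ r : ℝ, r ∈ Sy → r ∈ Set.Icc (0:ℝ) 1 := fun r hr => hSy (Finset.mem_coe.mpr hr)
  have hIz : ∀ r : ℝ, r ∈ Sz → r ∈ Set.Icc (0:ℝ) 1 := fun r hr => hSz (Finset.mem_coe.mpr hr)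
  have h0I : (0:ℝ) ∈ Set.Icc (0:ℝ) 1 := Set.left_mem_Icc.mpr zero_le_one
  have h1I : (1:ℝ) ∈ Set.Icc (0:ℝ) 1 := Set.right_mem_Icc.mpr zero_le_one
  -- M is strictly positive (via the elementary square cycle)
  have hMpos : 0 < M := by
    have d12 : ((0,0,0) : ℝ×ℝ×ℝ) ≠ (0,1,0) := by
      simp only [ne_eq, Prod.mk.injEq]; norm_num
    have d13 : ((0,0,0) : ℝ×ℝ×ℝ) ≠ (1,0,0) := by
      simp only [ne_eq, Prod.mk.injEq]; norm_num
    have d14 : ((0,0,0) : ℝ×ℝ×ℝ) ≠ (1,1,0) := by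
      simp only [ne_eq, Prod.mk.injEq]; norm_num
    have d23 : ((0,1,0) : ℝ×ℝ×ℝ) ≠ (1,0,0) := by
      simp only [ne_eq, Prod.mk.injEq]; norm_num
    have d24 : ((0,1,0) : ℝ×ℝ×ℝ) ≠ (1,1,0) := by
      simp only [ne_eq, Prod.mk.injEq]; norm_num
    have d34 : ((1,0,0) : ℝ×ℝ×ℝ) ≠ (1,1,0) := by
      simp only [ne_eq, Prod.mk.injEq]; norm_num
    have m1 : ((0,0,0) : ℝ×ℝ×ℝ) ∈ G := (hGmem _).mpr ⟨h0x, h0y, h0z⟩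
    have m2 : ((0,1,0) : ℝ×ℝ×ℝ) ∈ G := (hGmem _).mpr ⟨h0x, h1y, h0z⟩
    have m3 : ((1,0,0) : ℝ×ℝ×ℝ) ∈ G := (hGmem _).mpr ⟨h1x, h0y, h0z⟩
    have m4 : ((1,1,0) : ℝ×ℝ×ℝ) ∈ G := (hGmem _).mpr ⟨h1x, h1y, h0z⟩
    have hmx4 : ∀ ξ : ℝ, ∑ g ∈ G,
        (if g.1 = ξ then nu4 (0,0,0) (0,1,0) (1,0,0) (1,1,0) g else 0) = 0 := by
      intro ξ
      have h : (∑ g ∈ G, (if g.1 = ξ then nu4 (0,0,0) (0,1,0) (1,0,0) (1,1,0) g else 0))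
          = (if (0:ℝ) = ξ then (1:ℝ) else 0) + (if (0:ℝ) = ξ then (-1:ℝ) else 0)
            + (if (1:ℝ) = ξ then (-1:ℝ) else 0) + (if (1:ℝ) = ξ then (1:ℝ) else 0) :=
        sum4 G _ _ _ _ m1 m2 m3 m4 d12 d13 d14 d23 d24 d34
          (fun g c => if g.1 = ξ then c else 0) (fun g => by simp)
      rw [h]; split_ifs <;> norm_num
    have hmy4 : ∀ ξ : ℝ, ∑ g ∈ G,
        (if g.2.1 = ξ then nu4 (0,0,0) (0,1,0) (1,0,0) (1,1,0) g else 0) = 0 := by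
      intro ξ
      have h : (∑ g ∈ G, (if g.2.1 = ξ then nu4 (0,0,0) (0,1,0) (1,0,0) (1,1,0) g else 0))
          = (if (0:ℝ) = ξ then (1:ℝ) else 0) + (if (1:ℝ) = ξ then (-1:ℝ) else 0)
            + (if (0:ℝ) = ξ then (-1:ℝ) else 0) + (if (1:ℝ) = ξ then (1:ℝ) else 0) :=
        sum4 G _ _ _ _ m1 m2 m3 m4 d12 d13 d14 d23 d24 d34
          (fun g c => if g.2.1 = ξ then c else 0) (fun g => by simp)
      rw [h]; split_ifs <;> norm_num
    have hmz4 : ∀ ξ : ℝ, ∑ g ∈ G,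
        (if g.2.2 = ξ then nu4 (0,0,0) (0,1,0) (1,0,0) (1,1,0) g else 0) = 0 := by
      intro ξ
      have h : (∑ g ∈ G, (if g.2.2 = ξ then nu4 (0,0,0) (0,1,0) (1,0,0) (1,1,0) g else 0))
          = (if (0:ℝ) = ξ then (1:ℝ) else 0) + (if (0:ℝ) = ξ then (-1:ℝ) else 0)
            + (if (0:ℝ) = ξ then (-1:ℝ) else 0) + (if (0:ℝ) = ξ then (1:ℝ) else 0) :=
        sum4 G _ _ _ _ m1 m2 m3 m4 d12 d13 d14 d23 d24 d34
          (fun g c => if g.2.2 = ξ then c else 0) (fun g => by simp)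
      rw [h]; split_ifs <;> norm_num
    have hL : (∑ g ∈ G, nu4 (0,0,0) (0,1,0) (1,0,0) (1,1,0) g * f g.1 g.2.1 g.2.2)
        = 1 * f 0 0 0 + (-1) * f 0 1 0 + (-1) * f 1 0 0 + 1 * f 1 1 0 :=
      sum4 G _ _ _ _ m1 m2 m3 m4 d12 d13 d14 d23 d24 d34
        (fun g c => c * f g.1 g.2.1 g.2.2) (fun g => by simp)
    have hA : (∑ g ∈ G, |nu4 (0,0,0) (0,1,0) (1,0,0) (1,1,0) g|)
        = |(1:ℝ)| + |(-1:ℝ)| + |(-1:ℝ)| + |(1:ℝ)| :=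
      sum4 G _ _ _ _ m1 m2 m3 m4 d12 d13 d14 d23 d24 d34
        (fun _ c => |c|) (fun g => abs_zero)
    have hΔ := hf.1 0 1 0 1 0 h0I h1I h0I h1I h0I zero_lt_one zero_lt_one
    have hM1 := M1 (nu4 (0,0,0) (0,1,0) (1,0,0) (1,1,0)) hmx4 hmy4 hmz4
    rw [hL, hA] at hM1
    have habs : |(1:ℝ)| + |(-1:ℝ)| + |(-1:ℝ)| + |(1:ℝ)| = 4 := by norm_num
    rw [habs] at hM1
    nlinarith
  -- lift rules
  have liftup_x : ∀ c n₂ n₃ p₂ p₃ : ℝ, c ∈ Sx → n₂ ∈ Sy → n₃ ∈ Sz → p₂ ∈ Sy → p₃ ∈ Sz →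
      μ (c, n₂, n₃) < 0 → 0 < μ (c, p₂, p₃) → c < 1 → n₂ ≤ p₂ → n₃ ≤ p₃ →
      ¬(n₂ = p₂ ∧ n₃ = p₃) → False := by
    intro c n₂ n₃ p₂ p₃ hc hn₂ hn₃ hp₂ hp₃ hμn hμp hc1 h2 h3 hne
    have hrect := rect_x c 1 n₂ n₃ p₂ p₃ hc h1x hn₂ hn₃ hp₂ hp₃ (ne_of_lt hc1) hne
    have hmono := mono_x f hf c 1 n₂ n₃ p₂ p₃ (hIx c hc) h1I (hIy n₂ hn₂) (hIz n₃ hn₃)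
      (hIy p₂ hp₂) (hIz p₃ hp₃) hc1 h2 h3
      (by simp only [ne_eq, Prod.mk.injEq]; exact hne)
    have hW1 := Wf_neg μ (c, n₂, n₃) 1 hμn
    have hW2 := Wf_pos μ (c, p₂, p₃) (-1) hμp
    have hW3 := Wf_le μ (1, n₂, n₃) (-1)
    have hW4 := Wf_le μ (1, p₂, p₃) 1
    have habs1 : |(-1:ℝ)| = 1 := by norm_num
    have habs2 : |(1:ℝ)| = 1 := by norm_num
    have hbr : Wf μ (c, n₂, n₃) 1 + Wf μ (c, p₂, p₃) (-1)
        + Wf μ (1, n₂, n₃) (-1) + Wf μ (1, p₂, p₃) 1 ≤ 0 := by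
      rw [hW1, hW2]; rw [habs1] at hW3; rw [habs2] at hW4; linarith
    have hms : M * (Wf μ (c, n₂, n₃) 1 + Wf μ (c, p₂, p₃) (-1)
        + Wf μ (1, n₂, n₃) (-1) + Wf μ (1, p₂, p₃) 1) ≤ 0 := by
      calc M * _ ≤ M * 0 := mul_le_mul_of_nonneg_left hbr (le_of_lt hMpos)
        _ = 0 := mul_zero M
    linarith
  have liftdown_x : ∀ c n₂ n₃ p₂ p₃ : ℝ, c ∈ Sx → n₂ ∈ Sy → n₃ ∈ Sz → p₂ ∈ Sy → p₃ ∈ Sz →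
      μ (c, n₂, n₃) < 0 → 0 < μ (c, p₂, p₃) → 0 < c → p₂ ≤ n₂ → p₃ ≤ n₃ →
      ¬(p₂ = n₂ ∧ p₃ = n₃) → False := by
    intro c n₂ n₃ p₂ p₃ hc hn₂ hn₃ hp₂ hp₃ hμn hμp hc0 h2 h3 hne
    have hne' : ¬(n₂ = p₂ ∧ n₃ = p₃) := fun h => hne ⟨h.1.symm, h.2.symm⟩
    have hrect := rect_x c 0 n₂ n₃ p₂ p₃ hc h0x hn₂ hn₃ hp₂ hp₃ (ne_of_gt hc0) hne'
    have hmono := mono_x f hf 0 c p₂ p₃ n₂ n₃ h0I (hIx c hc) (hIy p₂ hp₂) (hIz p₃ hp₃)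
      (hIy n₂ hn₂) (hIz n₃ hn₃) hc0 h2 h3
      (by simp only [ne_eq, Prod.mk.injEq]; exact hne)
    have hW1 := Wf_neg μ (c, n₂, n₃) 1 hμn
    have hW2 := Wf_pos μ (c, p₂, p₃) (-1) hμp
    have hW3 := Wf_le μ (0, n₂, n₃) (-1)
    have hW4 := Wf_le μ (0, p₂, p₃) 1
    have habs1 : |(-1:ℝ)| = 1 := by norm_num
    have habs2 : |(1:ℝ)| = 1 := by norm_num
    have hbr : Wf μ (c, n₂, n₃) 1 + Wf μ (c, p₂, p₃) (-1)
        + Wf μ (0, n₂, n₃) (-1) + Wf μ (0, p₂, p₃) 1 ≤ 0 := by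
      rw [hW1, hW2]; rw [habs1] at hW3; rw [habs2] at hW4; linarith
    have hms : M * (Wf μ (c, n₂, n₃) 1 + Wf μ (c, p₂, p₃) (-1)
        + Wf μ (0, n₂, n₃) (-1) + Wf μ (0, p₂, p₃) 1) ≤ 0 := by
      calc M * _ ≤ M * 0 := mul_le_mul_of_nonneg_left hbr (le_of_lt hMpos)
        _ = 0 := mul_zero M
    linarith
  have liftup_y : ∀ c n₁ n₃ p₁ p₃ : ℝ, c ∈ Sy → n₁ ∈ Sx → n₃ ∈ Sz → p₁ ∈ Sx → p₃ ∈ Sz →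
      μ (n₁, c, n₃) < 0 → 0 < μ (p₁, c, p₃) → c < 1 → n₁ ≤ p₁ → n₃ ≤ p₃ →
      ¬(n₁ = p₁ ∧ n₃ = p₃) → False := by
    intro c n₁ n₃ p₁ p₃ hc hn₁ hn₃ hp₁ hp₃ hμn hμp hc1 h1 h3 hne
    have hrect := rect_y c 1 n₁ n₃ p₁ p₃ hc h1y hn₁ hn₃ hp₁ hp₃ (ne_of_lt hc1) hne
    have hmono := mono_y f hf c 1 n₁ n₃ p₁ p₃ (hIy c hc) h1I (hIx n₁ hn₁) (hIz n₃ hn₃)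
      (hIx p₁ hp₁) (hIz p₃ hp₃) hc1 h1 h3
      (by simp only [ne_eq, Prod.mk.injEq]; exact hne)
    have hW1 := Wf_neg μ (n₁, c, n₃) 1 hμn
    have hW2 := Wf_pos μ (p₁, c, p₃) (-1) hμp
    have hW3 := Wf_le μ (n₁, 1, n₃) (-1)
    have hW4 := Wf_le μ (p₁, 1, p₃) 1
    have habs1 : |(-1:ℝ)| = 1 := by norm_num
    have habs2 : |(1:ℝ)| = 1 := by norm_num
    have hbr : Wf μ (n₁, c, n₃) 1 + Wf μ (p₁, c, p₃) (-1)
        + Wf μ (n₁, 1, n₃) (-1) + Wf μ (p₁, 1, p₃) 1 ≤ 0 := by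
      rw [hW1, hW2]; rw [habs1] at hW3; rw [habs2] at hW4; linarith
    have hms : M * (Wf μ (n₁, c, n₃) 1 + Wf μ (p₁, c, p₃) (-1)
        + Wf μ (n₁, 1, n₃) (-1) + Wf μ (p₁, 1, p₃) 1) ≤ 0 := by
      calc M * _ ≤ M * 0 := mul_le_mul_of_nonneg_left hbr (le_of_lt hMpos)
        _ = 0 := mul_zero M
    linarith
  have liftdown_y : ∀ c n₁ n₃ p₁ p₃ : ℝ, c ∈ Sy → n₁ ∈ Sx → n₃ ∈ Sz → p₁ ∈ Sx → p₃ ∈ Sz →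
      μ (n₁, c, n₃) < 0 → 0 < μ (p₁, c, p₃) → 0 < c → p₁ ≤ n₁ → p₃ ≤ n₃ →
      ¬(p₁ = n₁ ∧ p₃ = n₃) → False := by
    intro c n₁ n₃ p₁ p₃ hc hn₁ hn₃ hp₁ hp₃ hμn hμp hc0 h1 h3 hne
    have hne' : ¬(n₁ = p₁ ∧ n₃ = p₃) := fun h => hne ⟨h.1.symm, h.2.symm⟩
    have hrect := rect_y c 0 n₁ n₃ p₁ p₃ hc h0y hn₁ hn₃ hp₁ hp₃ (ne_of_gt hc0) hne'
    have hmono := mono_y f hf 0 c p₁ p₃ n₁ n₃ h0I (hIy c hc) (hIx p₁ hp₁) (hIz p₃ hp₃)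
      (hIx n₁ hn₁) (hIz n₃ hn₃) hc0 h1 h3
      (by simp only [ne_eq, Prod.mk.injEq]; exact hne)
    have hW1 := Wf_neg μ (n₁, c, n₃) 1 hμn
    have hW2 := Wf_pos μ (p₁, c, p₃) (-1) hμp
    have hW3 := Wf_le μ (n₁, 0, n₃) (-1)
    have hW4 := Wf_le μ (p₁, 0, p₃) 1
    have habs1 : |(-1:ℝ)| = 1 := by norm_num
    have habs2 : |(1:ℝ)| = 1 := by norm_num
    have hbr : Wf μ (n₁, c, n₃) 1 + Wf μ (p₁, c, p₃) (-1)
        + Wf μ (n₁, 0, n₃) (-1) + Wf μ (p₁, 0, p₃) 1 ≤ 0 := by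
      rw [hW1, hW2]; rw [habs1] at hW3; rw [habs2] at hW4; linarith
    have hms : M * (Wf μ (n₁, c, n₃) 1 + Wf μ (p₁, c, p₃) (-1)
        + Wf μ (n₁, 0, n₃) (-1) + Wf μ (p₁, 0, p₃) 1) ≤ 0 := by
      calc M * _ ≤ M * 0 := mul_le_mul_of_nonneg_left hbr (le_of_lt hMpos)
        _ = 0 := mul_zero M
    linarith
  have liftup_z : ∀ c n₁ n₂ p₁ p₂ : ℝ, c ∈ Sz → n₁ ∈ Sx → n₂ ∈ Sy → p₁ ∈ Sx → p₂ ∈ Sy →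
      μ (n₁, n₂, c) < 0 → 0 < μ (p₁, p₂, c) → c < 1 → n₁ ≤ p₁ → n₂ ≤ p₂ →
      ¬(n₁ = p₁ ∧ n₂ = p₂) → False := by
    intro c n₁ n₂ p₁ p₂ hc hn₁ hn₂ hp₁ hp₂ hμn hμp hc1 h1 h2 hne
    have hrect := rect_z c 1 n₁ n₂ p₁ p₂ hc h1z hn₁ hn₂ hp₁ hp₂ (ne_of_lt hc1) hne
    have hmono := mono_z f hf c 1 n₁ n₂ p₁ p₂ (hIz c hc) h1I (hIx n₁ hn₁) (hIy n₂ hn₂)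
      (hIx p₁ hp₁) (hIy p₂ hp₂) hc1 h1 h2
      (by simp only [ne_eq, Prod.mk.injEq]; exact hne)
    have hW1 := Wf_neg μ (n₁, n₂, c) 1 hμn
    have hW2 := Wf_pos μ (p₁, p₂, c) (-1) hμp
    have hW3 := Wf_le μ (n₁, n₂, 1) (-1)
    have hW4 := Wf_le μ (p₁, p₂, 1) 1
    have habs1 : |(-1:ℝ)| = 1 := by norm_num
    have habs2 : |(1:ℝ)| = 1 := by norm_num
    have hbr : Wf μ (n₁, n₂, c) 1 + Wf μ (p₁, p₂, c) (-1)
        + Wf μ (n₁, n₂, 1) (-1) + Wf μ (p₁, p₂, 1) 1 ≤ 0 := by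
      rw [hW1, hW2]; rw [habs1] at hW3; rw [habs2] at hW4; linarith
    have hms : M * (Wf μ (n₁, n₂, c) 1 + Wf μ (p₁, p₂, c) (-1)
        + Wf μ (n₁, n₂, 1) (-1) + Wf μ (p₁, p₂, 1) 1) ≤ 0 := by
      calc M * _ ≤ M * 0 := mul_le_mul_of_nonneg_left hbr (le_of_lt hMpos)
        _ = 0 := mul_zero M
    linarith
  have liftdown_z : ∀ c n₁ n₂ p₁ p₂ : ℝ, c ∈ Sz → n₁ ∈ Sx → n₂ ∈ Sy → p₁ ∈ Sx → p₂ ∈ Sy →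
      μ (n₁, n₂, c) < 0 → 0 < μ (p₁, p₂, c) → 0 < c → p₁ ≤ n₁ → p₂ ≤ n₂ →
      ¬(p₁ = n₁ ∧ p₂ = n₂) → False := by
    intro c n₁ n₂ p₁ p₂ hc hn₁ hn₂ hp₁ hp₂ hμn hμp hc0 h1 h2 hne
    have hne' : ¬(n₁ = p₁ ∧ n₂ = p₂) := fun h => hne ⟨h.1.symm, h.2.symm⟩
    have hrect := rect_z c 0 n₁ n₂ p₁ p₂ hc h0z hn₁ hn₂ hp₁ hp₂ (ne_of_gt hc0) hne'
    have hmono := mono_z f hf 0 c p₁ p₂ n₁ n₂ h0I (hIz c hc) (hIx p₁ hp₁) (hIy p₂ hp₂)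
      (hIx n₁ hn₁) (hIy n₂ hn₂) hc0 h1 h2
      (by simp only [ne_eq, Prod.mk.injEq]; exact hne)
    have hW1 := Wf_neg μ (n₁, n₂, c) 1 hμn
    have hW2 := Wf_pos μ (p₁, p₂, c) (-1) hμp
    have hW3 := Wf_le μ (n₁, n₂, 0) (-1)
    have hW4 := Wf_le μ (p₁, p₂, 0) 1
    have habs1 : |(-1:ℝ)| = 1 := by norm_num
    have habs2 : |(1:ℝ)| = 1 := by norm_num
    have hbr : Wf μ (n₁, n₂, c) 1 + Wf μ (p₁, p₂, c) (-1)
        + Wf μ (n₁, n₂, 0) (-1) + Wf μ (p₁, p₂, 0) 1 ≤ 0 := by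
      rw [hW1, hW2]; rw [habs1] at hW3; rw [habs2] at hW4; linarith
    have hms : M * (Wf μ (n₁, n₂, c) 1 + Wf μ (p₁, p₂, c) (-1)
        + Wf μ (n₁, n₂, 0) (-1) + Wf μ (p₁, p₂, 0) 1) ≤ 0 := by
      calc M * _ ≤ M * 0 := mul_le_mul_of_nonneg_left hbr (le_of_lt hMpos)
        _ = 0 := mul_zero M
    linarith
  -- swap rules : two positive points must be coordinatewise comparable
  have swap_x : ∀ a₁ a₂ a₃ b₁ b₂ b₃ : ℝ, a₁ ∈ Sx → a₂ ∈ Sy → a₃ ∈ Sz →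
      b₁ ∈ Sx → b₂ ∈ Sy → b₃ ∈ Sz → 0 < μ (a₁, a₂, a₃) → 0 < μ (b₁, b₂, b₃) →
      a₁ < b₁ → b₂ ≤ a₂ → b₃ ≤ a₃ → ¬(b₂ = a₂ ∧ b₃ = a₃) → False := by
    intro a₁ a₂ a₃ b₁ b₂ b₃ ha₁ ha₂ ha₃ hb₁ hb₂ hb₃ hμa' hμb h1 h2 h3 hne
    have hrect := rect_x a₁ b₁ b₂ b₃ a₂ a₃ ha₁ hb₁ hb₂ hb₃ ha₂ ha₃ (ne_of_lt h1) hne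
    have hmono := mono_x f hf a₁ b₁ b₂ b₃ a₂ a₃ (hIx a₁ ha₁) (hIx b₁ hb₁) (hIy b₂ hb₂)
      (hIz b₃ hb₃) (hIy a₂ ha₂) (hIz a₃ ha₃) h1 h2 h3
      (by simp only [ne_eq, Prod.mk.injEq]; exact hne)
    have hW1 := Wf_le μ (a₁, b₂, b₃) 1
    have hW2 := Wf_pos μ (a₁, a₂, a₃) (-1) hμa'
    have hW3 := Wf_pos μ (b₁, b₂, b₃) (-1) hμb
    have hW4 := Wf_le μ (b₁, a₂, a₃) 1
    have habs2 : |(1:ℝ)| = 1 := by norm_num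
    have hbr : Wf μ (a₁, b₂, b₃) 1 + Wf μ (a₁, a₂, a₃) (-1)
        + Wf μ (b₁, b₂, b₃) (-1) + Wf μ (b₁, a₂, a₃) 1 ≤ 0 := by
      rw [hW2, hW3]; rw [habs2] at hW1 hW4; linarith
    have hms : M * (Wf μ (a₁, b₂, b₃) 1 + Wf μ (a₁, a₂, a₃) (-1)
        + Wf μ (b₁, b₂, b₃) (-1) + Wf μ (b₁, a₂, a₃) 1) ≤ 0 := by
      calc M * _ ≤ M * 0 := mul_le_mul_of_nonneg_left hbr (le_of_lt hMpos)
        _ = 0 := mul_zero M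
    linarith
  have swap_y : ∀ a₁ a₂ a₃ b₁ b₂ b₃ : ℝ, a₁ ∈ Sx → a₂ ∈ Sy → a₃ ∈ Sz →
      b₁ ∈ Sx → b₂ ∈ Sy → b₃ ∈ Sz → 0 < μ (a₁, a₂, a₃) → 0 < μ (b₁, b₂, b₃) →
      a₂ < b₂ → b₁ ≤ a₁ → b₃ ≤ a₃ → ¬(b₁ = a₁ ∧ b₃ = a₃) → False := by
    intro a₁ a₂ a₃ b₁ b₂ b₃ ha₁ ha₂ ha₃ hb₁ hb₂ hb₃ hμa' hμb h2 h1 h3 hne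
    have hrect := rect_y a₂ b₂ b₁ b₃ a₁ a₃ ha₂ hb₂ hb₁ hb₃ ha₁ ha₃ (ne_of_lt h2) hne
    have hmono := mono_y f hf a₂ b₂ b₁ b₃ a₁ a₃ (hIy a₂ ha₂) (hIy b₂ hb₂) (hIx b₁ hb₁)
      (hIz b₃ hb₃) (hIx a₁ ha₁) (hIz a₃ ha₃) h2 h1 h3
      (by simp only [ne_eq, Prod.mk.injEq]; exact hne)
    have hW1 := Wf_le μ (b₁, a₂, b₃) 1
    have hW2 := Wf_pos μ (a₁, a₂, a₃) (-1) hμa'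
    have hW3 := Wf_pos μ (b₁, b₂, b₃) (-1) hμb
    have hW4 := Wf_le μ (a₁, b₂, a₃) 1
    have habs2 : |(1:ℝ)| = 1 := by norm_num
    have hbr : Wf μ (b₁, a₂, b₃) 1 + Wf μ (a₁, a₂, a₃) (-1)
        + Wf μ (b₁, b₂, b₃) (-1) + Wf μ (a₁, b₂, a₃) 1 ≤ 0 := by
      rw [hW2, hW3]; rw [habs2] at hW1 hW4; linarith
    have hms : M * (Wf μ (b₁, a₂, b₃) 1 + Wf μ (a₁, a₂, a₃) (-1)
        + Wf μ (b₁, b₂, b₃) (-1) + Wf μ (a₁, b₂, a₃) 1) ≤ 0 := by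
      calc M * _ ≤ M * 0 := mul_le_mul_of_nonneg_left hbr (le_of_lt hMpos)
        _ = 0 := mul_zero M
    linarith
  have swap_z : ∀ a₁ a₂ a₃ b₁ b₂ b₃ : ℝ, a₁ ∈ Sx → a₂ ∈ Sy → a₃ ∈ Sz →
      b₁ ∈ Sx → b₂ ∈ Sy → b₃ ∈ Sz → 0 < μ (a₁, a₂, a₃) → 0 < μ (b₁, b₂, b₃) →
      a₃ < b₃ → b₁ ≤ a₁ → b₂ ≤ a₂ → ¬(b₁ = a₁ ∧ b₂ = a₂) → False := by
    intro a₁ a₂ a₃ b₁ b₂ b₃ ha₁ ha₂ ha₃ hb₁ hb₂ hb₃ hμa' hμb h3 h1 h2 hne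
    have hrect := rect_z a₃ b₃ b₁ b₂ a₁ a₂ ha₃ hb₃ hb₁ hb₂ ha₁ ha₂ (ne_of_lt h3) hne
    have hmono := mono_z f hf a₃ b₃ b₁ b₂ a₁ a₂ (hIz a₃ ha₃) (hIz b₃ hb₃) (hIx b₁ hb₁)
      (hIy b₂ hb₂) (hIx a₁ ha₁) (hIy a₂ ha₂) h3 h1 h2
      (by simp only [ne_eq, Prod.mk.injEq]; exact hne)
    have hW1 := Wf_le μ (b₁, b₂, a₃) 1
    have hW2 := Wf_pos μ (a₁, a₂, a₃) (-1) hμa'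
    have hW3 := Wf_pos μ (b₁, b₂, b₃) (-1) hμb
    have hW4 := Wf_le μ (a₁, a₂, b₃) 1
    have habs2 : |(1:ℝ)| = 1 := by norm_num
    have hbr : Wf μ (b₁, b₂, a₃) 1 + Wf μ (a₁, a₂, a₃) (-1)
        + Wf μ (b₁, b₂, b₃) (-1) + Wf μ (a₁, a₂, b₃) 1 ≤ 0 := by
      rw [hW2, hW3]; rw [habs2] at hW1 hW4; linarith
    have hms : M * (Wf μ (b₁, b₂, a₃) 1 + Wf μ (a₁, a₂, a₃) (-1)
        + Wf μ (b₁, b₂, b₃) (-1) + Wf μ (a₁, a₂, b₃) 1) ≤ 0 := by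
      calc M * _ ≤ M * 0 := mul_le_mul_of_nonneg_left hbr (le_of_lt hMpos)
        _ = 0 := mul_zero M
    linarith
  
  -- balance: every coordinate plane containing a negative weight contains a positive one
  have balX : ∀ ξ : ℝ, (∃ j, (x j).1 = ξ ∧ lam j < 0) → ∃ j, (x j).1 = ξ ∧ 0 < lam j := by
    rintro ξ ⟨j₀, hj₀, hj₀n⟩
    by_contra hno
    push_neg at hno
    have hlt : (∑ j, if (x j).1 = ξ then lam j else 0) < ∑ _j : Fin m, (0:ℝ) := by
      apply Finset.sum_lt_sum
      · intro j _
        split_ifs with h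
        · exact hno j h
        · exact le_refl 0
      · exact ⟨j₀, Finset.mem_univ j₀, by rw [if_pos hj₀]; simpa using hj₀n⟩
    rw [hmx ξ] at hlt
    simp at hlt
  have balY : ∀ ξ : ℝ, (∃ j, (x j).2.1 = ξ ∧ lam j < 0) → ∃ j, (x j).2.1 = ξ ∧ 0 < lam j := by
    rintro ξ ⟨j₀, hj₀, hj₀n⟩
    by_contra hno
    push_neg at hno
    have hlt : (∑ j, if (x j).2.1 = ξ then lam j else 0) < ∑ _j : Fin m, (0:ℝ) := by
      apply Finset.sum_lt_sum
      · intro j _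
        split_ifs with h
        · exact hno j h
        · exact le_refl 0
      · exact ⟨j₀, Finset.mem_univ j₀, by rw [if_pos hj₀]; simpa using hj₀n⟩
    rw [hmy ξ] at hlt
    simp at hlt
  have balZ : ∀ ξ : ℝ, (∃ j, (x j).2.2 = ξ ∧ lam j < 0) → ∃ j, (x j).2.2 = ξ ∧ 0 < lam j := by
    rintro ξ ⟨j₀, hj₀, hj₀n⟩
    by_contra hno
    push_neg at hno
    have hlt : (∑ j, if (x j).2.2 = ξ then lam j else 0) < ∑ _j : Fin m, (0:ℝ) := by
      apply Finset.sum_lt_sum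
      · intro j _
        split_ifs with h
        · exact hno j h
        · exact le_refl 0
      · exact ⟨j₀, Finset.mem_univ j₀, by rw [if_pos hj₀]; simpa using hj₀n⟩
    rw [hmz ξ] at hlt
    simp at hlt
  -- the negative point a = (u,v,w)
  obtain ⟨hu_mem, hv_mem, hw_mem⟩ := hpts i
  set u : ℝ := (x i).1 with hudef
  set v : ℝ := (x i).2.1 with hvdef
  set w : ℝ := (x i).2.2 with hwdef
  have hxa : x i = (u, v, w) := rfl
  have hμa : μ (u, v, w) < 0 := by rw [← hxa, mu_apply i]; exact hilam
  have huI : u ∈ Set.Icc (0:ℝ) 1 := hIx u hu_mem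
  have hvI : v ∈ Set.Icc (0:ℝ) 1 := hIy v hv_mem
  have hwI : w ∈ Set.Icc (0:ℝ) 1 := hIz w hw_mem
  -- mixed-position lemmas for positives in the three planes through a
  have mixedX : ∀ p₂ p₃ : ℝ, p₂ ∈ Sy → p₃ ∈ Sz → 0 < μ (u, p₂, p₃) → 0 < u → u < 1 →
      (p₂ < v ∧ w < p₃) ∨ (v < p₂ ∧ p₃ < w) := by
    intro p₂ p₃ hp₂ hp₃ hμp hu0 hu1
    have hneq : ¬(v = p₂ ∧ w = p₃) := by
      rintro ⟨e1, e2⟩; rw [← e1, ← e2] at hμp; linarith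
    rcases lt_trichotomy p₂ v with h1 | h1 | h1 <;> rcases lt_trichotomy p₃ w with h2 | h2 | h2
    · exact (liftdown_x u v w p₂ p₃ hu_mem hv_mem hw_mem hp₂ hp₃ hμa hμp hu0
        (le_of_lt h1) (le_of_lt h2) (fun hh => (ne_of_lt h1) hh.1)).elim
    · exact (liftdown_x u v w p₂ p₃ hu_mem hv_mem hw_mem hp₂ hp₃ hμa hμp hu0
        (le_of_lt h1) (le_of_eq h2) (fun hh => (ne_of_lt h1) hh.1)).elim
    · exact Or.inl ⟨h1, h2⟩
    · exact (liftdown_x u v w p₂ p₃ hu_mem hv_mem hw_mem hp₂ hp₃ hμa hμp hu0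
        (le_of_eq h1) (le_of_lt h2) (fun hh => (ne_of_lt h2) hh.2)).elim
    · exact absurd ⟨h1.symm, h2.symm⟩ hneq
    · exact (liftup_x u v w p₂ p₃ hu_mem hv_mem hw_mem hp₂ hp₃ hμa hμp hu1
        (le_of_eq h1.symm) (le_of_lt h2) hneq).elim
    · exact Or.inr ⟨h1, h2⟩
    · exact (liftup_x u v w p₂ p₃ hu_mem hv_mem hw_mem hp₂ hp₃ hμa hμp hu1
        (le_of_lt h1) (le_of_eq h2.symm) hneq).elim
    · exact (liftup_x u v w p₂ p₃ hu_mem hv_mem hw_mem hp₂ hp₃ hμa hμp hu1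
        (le_of_lt h1) (le_of_lt h2) hneq).elim
  have mixedY : ∀ q₁ q₃ : ℝ, q₁ ∈ Sx → q₃ ∈ Sz → 0 < μ (q₁, v, q₃) → 0 < v → v < 1 →
      (q₁ < u ∧ w < q₃) ∨ (u < q₁ ∧ q₃ < w) := by
    intro q₁ q₃ hq₁ hq₃ hμq hv0 hv1
    have hneq : ¬(u = q₁ ∧ w = q₃) := by
      rintro ⟨e1, e2⟩; rw [← e1, ← e2] at hμq; linarith
    rcases lt_trichotomy q₁ u with h1 | h1 | h1 <;> rcases lt_trichotomy q₃ w with h2 | h2 | h2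
    · exact (liftdown_y v u w q₁ q₃ hv_mem hu_mem hw_mem hq₁ hq₃ hμa hμq hv0
        (le_of_lt h1) (le_of_lt h2) (fun hh => (ne_of_lt h1) hh.1)).elim
    · exact (liftdown_y v u w q₁ q₃ hv_mem hu_mem hw_mem hq₁ hq₃ hμa hμq hv0
        (le_of_lt h1) (le_of_eq h2) (fun hh => (ne_of_lt h1) hh.1)).elim
    · exact Or.inl ⟨h1, h2⟩
    · exact (liftdown_y v u w q₁ q₃ hv_mem hu_mem hw_mem hq₁ hq₃ hμa hμq hv0
        (le_of_eq h1) (le_of_lt h2) (fun hh => (ne_of_lt h2) hh.2)).elim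
    · exact absurd ⟨h1.symm, h2.symm⟩ hneq
    · exact (liftup_y v u w q₁ q₃ hv_mem hu_mem hw_mem hq₁ hq₃ hμa hμq hv1
        (le_of_eq h1.symm) (le_of_lt h2) hneq).elim
    · exact Or.inr ⟨h1, h2⟩
    · exact (liftup_y v u w q₁ q₃ hv_mem hu_mem hw_mem hq₁ hq₃ hμa hμq hv1
        (le_of_lt h1) (le_of_eq h2.symm) hneq).elim
    · exact (liftup_y v u w q₁ q₃ hv_mem hu_mem hw_mem hq₁ hq₃ hμa hμq hv1
        (le_of_lt h1) (le_of_lt h2) hneq).elim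
  have mixedZ : ∀ r₁ r₂ : ℝ, r₁ ∈ Sx → r₂ ∈ Sy → 0 < μ (r₁, r₂, w) → 0 < w → w < 1 →
      (r₁ < u ∧ v < r₂) ∨ (u < r₁ ∧ r₂ < v) := by
    intro r₁ r₂ hr₁ hr₂ hμr hw0 hw1
    have hneq : ¬(u = r₁ ∧ v = r₂) := by
      rintro ⟨e1, e2⟩; rw [← e1, ← e2] at hμr; linarith
    rcases lt_trichotomy r₁ u with h1 | h1 | h1 <;> rcases lt_trichotomy r₂ v with h2 | h2 | h2
    · exact (liftdown_z w u v r₁ r₂ hw_mem hu_mem hv_mem hr₁ hr₂ hμa hμr hw0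
        (le_of_lt h1) (le_of_lt h2) (fun hh => (ne_of_lt h1) hh.1)).elim
    · exact (liftdown_z w u v r₁ r₂ hw_mem hu_mem hv_mem hr₁ hr₂ hμa hμr hw0
        (le_of_lt h1) (le_of_eq h2) (fun hh => (ne_of_lt h1) hh.1)).elim
    · exact Or.inl ⟨h1, h2⟩
    · exact (liftdown_z w u v r₁ r₂ hw_mem hu_mem hv_mem hr₁ hr₂ hμa hμr hw0
        (le_of_eq h1) (le_of_lt h2) (fun hh => (ne_of_lt h2) hh.2)).elim
    · exact absurd ⟨h1.symm, h2.symm⟩ hneq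
    · exact (liftup_z w u v r₁ r₂ hw_mem hu_mem hv_mem hr₁ hr₂ hμa hμr hw1
        (le_of_eq h1.symm) (le_of_lt h2) hneq).elim
    · exact Or.inr ⟨h1, h2⟩
    · exact (liftup_z w u v r₁ r₂ hw_mem hu_mem hv_mem hr₁ hr₂ hμa hμr hw1
        (le_of_lt h1) (le_of_eq h2.symm) hneq).elim
    · exact (liftup_z w u v r₁ r₂ hw_mem hu_mem hv_mem hr₁ hr₂ hμa hμr hw1
        (le_of_lt h1) (le_of_lt h2) hneq).elim
  -- two-plane clash lemmas
  have claim2_yz : 0 < v → v < 1 → 0 < w → w < 1 → False := by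
    intro hv0 hv1 hw0 hw1
    obtain ⟨j, hj1, hjpos⟩ := balY v ⟨i, hvdef.symm, hilam⟩
    have hxj : x j = ((x j).1, v, (x j).2.2) := by
      have h : x j = ((x j).1, (x j).2.1, (x j).2.2) := rfl
      rw [hj1] at h; exact h
    have hμq : 0 < μ ((x j).1, v, (x j).2.2) := by
      rw [← hxj, mu_apply j]; exact hjpos
    obtain ⟨hq₁m, _, hq₃m⟩ := hpts j
    have hq := mixedY (x j).1 (x j).2.2 hq₁m hq₃m hμq hv0 hv1
    obtain ⟨k, hk1, hkpos⟩ := balZ w ⟨i, hwdef.symm, hilam⟩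
    have hxk : x k = ((x k).1, (x k).2.1, w) := by
      have h : x k = ((x k).1, (x k).2.1, (x k).2.2) := rfl
      rw [hk1] at h; exact h
    have hμr : 0 < μ ((x k).1, (x k).2.1, w) := by
      rw [← hxk, mu_apply k]; exact hkpos
    obtain ⟨hr₁m, hr₂m, _⟩ := hpts k
    have hr := mixedZ (x k).1 (x k).2.1 hr₁m hr₂m hμr hw0 hw1
    rcases hq with ⟨hqa, hqb⟩ | ⟨hqa, hqb⟩ <;> rcases hr with ⟨hra, hrb⟩ | ⟨hra, hrb⟩
    · by_cases hc : (x j).1 ≤ (x k).1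
      · exact swap_z (x k).1 (x k).2.1 w (x j).1 v (x j).2.2 hr₁m hr₂m hw_mem hq₁m
          hv_mem hq₃m hμr hμq hqb hc (le_of_lt hrb) (fun hh => (ne_of_lt hrb) hh.2)
      · exact swap_y (x j).1 v (x j).2.2 (x k).1 (x k).2.1 w hq₁m hv_mem hq₃m hr₁m
          hr₂m hw_mem hμq hμr hrb (le_of_lt (not_le.mp hc)) (le_of_lt hqb)
          (fun hh => (ne_of_lt hqb) hh.2)
    · exact swap_x (x j).1 v (x j).2.2 (x k).1 (x k).2.1 w hq₁m hv_mem hq₃m hr₁m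
        hr₂m hw_mem hμq hμr (lt_trans hqa hra) (le_of_lt hrb) (le_of_lt hqb)
        (fun hh => (ne_of_lt hrb) hh.1)
    · exact swap_x (x k).1 (x k).2.1 w (x j).1 v (x j).2.2 hr₁m hr₂m hw_mem hq₁m
        hv_mem hq₃m hμr hμq (lt_trans hra hqa) (le_of_lt hrb) (le_of_lt hqb)
        (fun hh => (ne_of_lt hrb) hh.1)
    · by_cases hc : (x k).1 ≤ (x j).1
      · exact swap_z (x j).1 v (x j).2.2 (x k).1 (x k).2.1 w hq₁m hv_mem hq₃m hr₁m
          hr₂m hw_mem hμq hμr hqb hc (le_of_lt hrb) (fun hh => (ne_of_lt hrb) hh.2)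
      · exact swap_y (x k).1 (x k).2.1 w (x j).1 v (x j).2.2 hr₁m hr₂m hw_mem hq₁m
          hv_mem hq₃m hμr hμq hrb (le_of_lt (not_le.mp hc)) (le_of_lt hqb)
          (fun hh => (ne_of_lt hqb) hh.2)
  have claim2_xz : 0 < u → u < 1 → 0 < w → w < 1 → False := by
    intro hu0 hu1 hw0 hw1
    obtain ⟨j, hj1, hjpos⟩ := balX u ⟨i, hudef.symm, hilam⟩
    have hxj : x j = (u, (x j).2.1, (x j).2.2) := by
      have h : x j = ((x j).1, (x j).2.1, (x j).2.2) := rfl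
      rw [hj1] at h; exact h
    have hμq : 0 < μ (u, (x j).2.1, (x j).2.2) := by
      rw [← hxj, mu_apply j]; exact hjpos
    obtain ⟨_, hq₂m, hq₃m⟩ := hpts j
    have hq := mixedX (x j).2.1 (x j).2.2 hq₂m hq₃m hμq hu0 hu1
    obtain ⟨k, hk1, hkpos⟩ := balZ w ⟨i, hwdef.symm, hilam⟩
    have hxk : x k = ((x k).1, (x k).2.1, w) := by
      have h : x k = ((x k).1, (x k).2.1, (x k).2.2) := rfl
      rw [hk1] at h; exact h
    have hμr : 0 < μ ((x k).1, (x k).2.1, w) := by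
      rw [← hxk, mu_apply k]; exact hkpos
    obtain ⟨hr₁m, hr₂m, _⟩ := hpts k
    have hr := mixedZ (x k).1 (x k).2.1 hr₁m hr₂m hμr hw0 hw1
    rcases hq with ⟨hqa, hqb⟩ | ⟨hqa, hqb⟩ <;> rcases hr with ⟨hra, hrb⟩ | ⟨hra, hrb⟩
    · exact swap_y u (x j).2.1 (x j).2.2 (x k).1 (x k).2.1 w hu_mem hq₂m hq₃m hr₁m
        hr₂m hw_mem hμq hμr (lt_trans hqa hrb) (le_of_lt hra) (le_of_lt hqb)
        (fun hh => (ne_of_lt hra) hh.1)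
    · by_cases hc : (x k).2.1 ≤ (x j).2.1
      · exact swap_x u (x j).2.1 (x j).2.2 (x k).1 (x k).2.1 w hu_mem hq₂m hq₃m hr₁m
          hr₂m hw_mem hμq hμr hra hc (le_of_lt hqb) (fun hh => (ne_of_lt hqb) hh.2)
      · exact swap_z (x k).1 (x k).2.1 w u (x j).2.1 (x j).2.2 hr₁m hr₂m hw_mem hu_mem
          hq₂m hq₃m hμr hμq hqb (le_of_lt hra) (le_of_lt (not_le.mp hc))
          (fun hh => (ne_of_lt hra) hh.1)
    · by_cases hc : (x j).2.1 ≤ (x k).2.1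
      · exact swap_x (x k).1 (x k).2.1 w u (x j).2.1 (x j).2.2 hr₁m hr₂m hw_mem hu_mem
          hq₂m hq₃m hμr hμq hra hc (le_of_lt hqb) (fun hh => (ne_of_lt hqb) hh.2)
      · exact swap_z u (x j).2.1 (x j).2.2 (x k).1 (x k).2.1 w hu_mem hq₂m hq₃m hr₁m
          hr₂m hw_mem hμq hμr hqb (le_of_lt hra) (le_of_lt (not_le.mp hc))
          (fun hh => (ne_of_lt hra) hh.1)
    · exact swap_y (x k).1 (x k).2.1 w u (x j).2.1 (x j).2.2 hr₁m hr₂m hw_mem hu_mem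
        hq₂m hq₃m hμr hμq (lt_trans hrb hqa) (le_of_lt hra) (le_of_lt hqb)
        (fun hh => (ne_of_lt hra) hh.1)
  have claim2_xy : 0 < u → u < 1 → 0 < v → v < 1 → False := by
    intro hu0 hu1 hv0 hv1
    obtain ⟨j, hj1, hjpos⟩ := balX u ⟨i, hudef.symm, hilam⟩
    have hxj : x j = (u, (x j).2.1, (x j).2.2) := by
      have h : x j = ((x j).1, (x j).2.1, (x j).2.2) := rfl
      rw [hj1] at h; exact h
    have hμq : 0 < μ (u, (x j).2.1, (x j).2.2) := by
      rw [← hxj, mu_apply j]; exact hjpos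
    obtain ⟨_, hq₂m, hq₃m⟩ := hpts j
    have hq := mixedX (x j).2.1 (x j).2.2 hq₂m hq₃m hμq hu0 hu1
    obtain ⟨k, hk1, hkpos⟩ := balY v ⟨i, hvdef.symm, hilam⟩
    have hxk : x k = ((x k).1, v, (x k).2.2) := by
      have h : x k = ((x k).1, (x k).2.1, (x k).2.2) := rfl
      rw [hk1] at h; exact h
    have hμr : 0 < μ ((x k).1, v, (x k).2.2) := by
      rw [← hxk, mu_apply k]; exact hkpos
    obtain ⟨hr₁m, _, hr₃m⟩ := hpts k
    have hr := mixedY (x k).1 (x k).2.2 hr₁m hr₃m hμr hv0 hv1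
    rcases hq with ⟨hqa, hqb⟩ | ⟨hqa, hqb⟩ <;> rcases hr with ⟨hra, hrb⟩ | ⟨hra, hrb⟩
    · by_cases hc : (x k).2.2 ≤ (x j).2.2
      · exact swap_y u (x j).2.1 (x j).2.2 (x k).1 v (x k).2.2 hu_mem hq₂m hq₃m hr₁m
          hv_mem hr₃m hμq hμr hqa (le_of_lt hra) hc (fun hh => (ne_of_lt hra) hh.1)
      · exact swap_x (x k).1 v (x k).2.2 u (x j).2.1 (x j).2.2 hr₁m hv_mem hr₃m hu_mem
          hq₂m hq₃m hμr hμq hra (le_of_lt hqa) (le_of_lt (not_le.mp hc))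
          (fun hh => (ne_of_lt hqa) hh.1)
    · exact swap_z (x k).1 v (x k).2.2 u (x j).2.1 (x j).2.2 hr₁m hv_mem hr₃m hu_mem
        hq₂m hq₃m hμr hμq (lt_trans hrb hqb) (le_of_lt hra) (le_of_lt hqa)
        (fun hh => (ne_of_lt hra) hh.1)
    · exact swap_z u (x j).2.1 (x j).2.2 (x k).1 v (x k).2.2 hu_mem hq₂m hq₃m hr₁m
        hv_mem hr₃m hμq hμr (lt_trans hqb hrb) (le_of_lt hra) (le_of_lt hqa)
        (fun hh => (ne_of_lt hra) hh.1)
    · by_cases hc : (x j).2.2 ≤ (x k).2.2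
      · exact swap_y (x k).1 v (x k).2.2 u (x j).2.1 (x j).2.2 hr₁m hv_mem hr₃m hu_mem
          hq₂m hq₃m hμr hμq hqa (le_of_lt hra) hc (fun hh => (ne_of_lt hra) hh.1)
      · exact swap_x u (x j).2.1 (x j).2.2 (x k).1 v (x k).2.2 hu_mem hq₂m hq₃m hr₁m
          hv_mem hr₃m hμq hμr hra (le_of_lt hqa) (le_of_lt (not_le.mp hc))
          (fun hh => (ne_of_lt hqa) hh.1)
  -- some coordinate equals 1
  have part1 : u = 1 ∨ v = 1 ∨ w = 1 := by
    by_contra hcon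
    push_neg at hcon
    obtain ⟨hne1u, hne1v, hne1w⟩ := hcon
    have hu1 : u < 1 := lt_of_le_of_ne huI.2 hne1u
    have hv1 : v < 1 := lt_of_le_of_ne hvI.2 hne1v
    have hw1 : w < 1 := lt_of_le_of_ne hwI.2 hne1w
    by_cases hu0 : u = 0
    · by_cases hv0 : v = 0
      · -- u = v = 0 : plane z = w
        obtain ⟨k, hk1, hkpos⟩ := balZ w ⟨i, hwdef.symm, hilam⟩
        have hxk : x k = ((x k).1, (x k).2.1, w) := by
          have h : x k = ((x k).1, (x k).2.1, (x k).2.2) := rfl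
          rw [hk1] at h; exact h
        have hμr : 0 < μ ((x k).1, (x k).2.1, w) := by
          rw [← hxk, mu_apply k]; exact hkpos
        obtain ⟨hr₁m, hr₂m, _⟩ := hpts k
        refine liftup_z w u v (x k).1 (x k).2.1 hw_mem hu_mem hv_mem hr₁m hr₂m hμa hμr hw1
          (by rw [hu0]; exact (hIx _ hr₁m).1) (by rw [hv0]; exact (hIy _ hr₂m).1) ?_
        rintro ⟨e1, e2⟩
        rw [← e1, ← e2] at hμr
        linarith
      · by_cases hw0 : w = 0
        · -- u = w = 0 : plane y = v
          obtain ⟨k, hk1, hkpos⟩ := balY v ⟨i, hvdef.symm, hilam⟩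
          have hxk : x k = ((x k).1, v, (x k).2.2) := by
            have h : x k = ((x k).1, (x k).2.1, (x k).2.2) := rfl
            rw [hk1] at h; exact h
          have hμr : 0 < μ ((x k).1, v, (x k).2.2) := by
            rw [← hxk, mu_apply k]; exact hkpos
          obtain ⟨hr₁m, _, hr₃m⟩ := hpts k
          refine liftup_y v u w (x k).1 (x k).2.2 hv_mem hu_mem hw_mem hr₁m hr₃m hμa hμr hv1
            (by rw [hu0]; exact (hIx _ hr₁m).1) (by rw [hw0]; exact (hIz _ hr₃m).1) ?_
          rintro ⟨e1, e2⟩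
          rw [← e1, ← e2] at hμr
          linarith
        · exact claim2_yz (lt_of_le_of_ne hvI.1 (Ne.symm hv0)) hv1
            (lt_of_le_of_ne hwI.1 (Ne.symm hw0)) hw1
    · by_cases hv0 : v = 0
      · by_cases hw0 : w = 0
        · -- v = w = 0 : plane x = u
          obtain ⟨k, hk1, hkpos⟩ := balX u ⟨i, hudef.symm, hilam⟩
          have hxk : x k = (u, (x k).2.1, (x k).2.2) := by
            have h : x k = ((x k).1, (x k).2.1, (x k).2.2) := rfl
            rw [hk1] at h; exact h
          have hμr : 0 < μ (u, (x k).2.1, (x k).2.2) := by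
            rw [← hxk, mu_apply k]; exact hkpos
          obtain ⟨_, hr₂m, hr₃m⟩ := hpts k
          refine liftup_x u v w (x k).2.1 (x k).2.2 hu_mem hv_mem hw_mem hr₂m hr₃m hμa hμr hu1
            (by rw [hv0]; exact (hIy _ hr₂m).1) (by rw [hw0]; exact (hIz _ hr₃m).1) ?_
          rintro ⟨e1, e2⟩
          rw [← e1, ← e2] at hμr
          linarith
        · exact claim2_xz (lt_of_le_of_ne huI.1 (Ne.symm hu0)) hu1
            (lt_of_le_of_ne hwI.1 (Ne.symm hw0)) hw1
      · by_cases hw0 : w = 0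
        · exact claim2_xy (lt_of_le_of_ne huI.1 (Ne.symm hu0)) hu1
            (lt_of_le_of_ne hvI.1 (Ne.symm hv0)) hv1
        · exact claim2_yz (lt_of_le_of_ne hvI.1 (Ne.symm hv0)) hv1
            (lt_of_le_of_ne hwI.1 (Ne.symm hw0)) hw1
  -- some coordinate equals 0
  have part0 : u = 0 ∨ v = 0 ∨ w = 0 := by
    by_contra hcon
    push_neg at hcon
    obtain ⟨hne0u, hne0v, hne0w⟩ := hcon
    have hu0 : 0 < u := lt_of_le_of_ne huI.1 (Ne.symm hne0u)
    have hv0 : 0 < v := lt_of_le_of_ne hvI.1 (Ne.symm hne0v)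
    have hw0 : 0 < w := lt_of_le_of_ne hwI.1 (Ne.symm hne0w)
    by_cases hu1 : u = 1
    · by_cases hv1 : v = 1
      · -- u = v = 1 : plane z = w
        obtain ⟨k, hk1, hkpos⟩ := balZ w ⟨i, hwdef.symm, hilam⟩
        have hxk : x k = ((x k).1, (x k).2.1, w) := by
          have h : x k = ((x k).1, (x k).2.1, (x k).2.2) := rfl
          rw [hk1] at h; exact h
        have hμr : 0 < μ ((x k).1, (x k).2.1, w) := by
          rw [← hxk, mu_apply k]; exact hkpos
        obtain ⟨hr₁m, hr₂m, _⟩ := hpts k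
        refine liftdown_z w u v (x k).1 (x k).2.1 hw_mem hu_mem hv_mem hr₁m hr₂m hμa hμr hw0
          (by rw [hu1]; exact (hIx _ hr₁m).2) (by rw [hv1]; exact (hIy _ hr₂m).2) ?_
        rintro ⟨e1, e2⟩
        rw [e1, e2] at hμr
        linarith
      · by_cases hw1 : w = 1
        · -- u = w = 1 : plane y = v
          obtain ⟨k, hk1, hkpos⟩ := balY v ⟨i, hvdef.symm, hilam⟩
          have hxk : x k = ((x k).1, v, (x k).2.2) := by
            have h : x k = ((x k).1, (x k).2.1, (x k).2.2) := rfl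
            rw [hk1] at h; exact h
          have hμr : 0 < μ ((x k).1, v, (x k).2.2) := by
            rw [← hxk, mu_apply k]; exact hkpos
          obtain ⟨hr₁m, _, hr₃m⟩ := hpts k
          refine liftdown_y v u w (x k).1 (x k).2.2 hv_mem hu_mem hw_mem hr₁m hr₃m hμa hμr hv0
            (by rw [hu1]; exact (hIx _ hr₁m).2) (by rw [hw1]; exact (hIz _ hr₃m).2) ?_
          rintro ⟨e1, e2⟩
          rw [e1, e2] at hμr
          linarith
        · exact claim2_yz hv0 (lt_of_le_of_ne hvI.2 hv1) hw0 (lt_of_le_of_ne hwI.2 hw1)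
    · by_cases hv1 : v = 1
      · by_cases hw1 : w = 1
        · -- v = w = 1 : plane x = u
          obtain ⟨k, hk1, hkpos⟩ := balX u ⟨i, hudef.symm, hilam⟩
          have hxk : x k = (u, (x k).2.1, (x k).2.2) := by
            have h : x k = ((x k).1, (x k).2.1, (x k).2.2) := rfl
            rw [hk1] at h; exact h
          have hμr : 0 < μ (u, (x k).2.1, (x k).2.2) := by
            rw [← hxk, mu_apply k]; exact hkpos
          obtain ⟨_, hr₂m, hr₃m⟩ := hpts k
          refine liftdown_x u v w (x k).2.1 (x k).2.2 hu_mem hv_mem hw_mem hr₂m hr₃m hμa hμr hu0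
            (by rw [hv1]; exact (hIy _ hr₂m).2) (by rw [hw1]; exact (hIz _ hr₃m).2) ?_
          rintro ⟨e1, e2⟩
          rw [e1, e2] at hμr
          linarith
        · exact claim2_xz hu0 (lt_of_le_of_ne huI.2 hu1) hw0 (lt_of_le_of_ne hwI.2 hw1)
      · by_cases hw1 : w = 1
        · exact claim2_xy hu0 (lt_of_le_of_ne huI.2 hu1) hv0 (lt_of_le_of_ne hvI.2 hv1)
        · exact claim2_yz hv0 (lt_of_le_of_ne hvI.2 hv1) hw0 (lt_of_le_of_ne hwI.2 hw1)
  -- conclude: a lies on one of the six off-diagonal edges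
  simp only [OffDiagonalEdges, Set.mem_union, Set.mem_setOf_eq]
  rcases part1 with h1 | h1 | h1 <;> rcases part0 with h0 | h0 | h0
  · rw [h1] at h0; norm_num at h0
  · exact Or.inl (Or.inl (Or.inl (Or.inl (Or.inr ⟨h1, h0, hwI⟩))))
  · exact Or.inl (Or.inl (Or.inl (Or.inr ⟨h1, hvI, h0⟩)))
  · exact Or.inl (Or.inr ⟨h0, h1, hwI⟩)
  · rw [h1] at h0; norm_num at h0
  · exact Or.inl (Or.inl (Or.inr ⟨huI, h1, h0⟩))
  · exact Or.inr ⟨h0, hvI, h1⟩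
  · exact Or.inl (Or.inl (Or.inl (Or.inl (Or.inl ⟨huI, h0, h1⟩))))
  · rw [h1] at h0; norm_num at h0
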